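/- arXiv:2003.14181 — 10 statements merged into one kernel-verified Lean document; each statement's English description precedes it below -/
import Mathlib

section
/- Let L = 2·c_max²/|z_s − z_r| and let 0 < λ < λ₀. Assume c_max − c_* > L·λ. Then for every c ∈ [c_min, c_max] with |c − c_*| > L·λ one has J_FWI(c) ≥ J_FWI(c_max); that is, c = c_max minimizes J_FWI over the part of [c_min, c_max] lying outside the interval [c_* − Lλ, c_* + Lλ]. (Theorem 1 of the paper.) -/
open MeasureTheory Set


lemma integral_ext {f : ℝ → ℝ} (hf : Continuous f) {p q a' b' : ℝ}
    (h0 : ∀ t, t ∉ Ioo p q → f t = 0) (h1 : a' ≤ p) (h2 : p ≤ q) (h3 : q ≤ b') :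
    ∫ t in a'..b', f t = ∫ t in p..q, f t := by
  have i1 : ∫ t in a'..p, f t = 0 := by
    rw [intervalIntegral.integral_congr (g := fun _ => (0:ℝ))]
    · simp
    · intro t ht
      rw [Set.uIcc_of_le h1] at ht
      exact h0 t (by intro h; exact absurd h.1 (not_lt.mpr ht.2))
  have i3 : ∫ t in q..b', f t = 0 := by
    rw [intervalIntegral.integral_congr (g := fun _ => (0:ℝ))]
    · simp
    · intro t ht
      rw [Set.uIcc_of_le h3] at ht
      exact h0 t (by intro h; exact absurd h.2 (not_lt.mpr ht.1))
  have A := intervalIntegral.integral_add_adjacent_intervals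
    (hf.intervalIntegrable a' p) (hf.intervalIntegrable p b') (μ := volume)
  have B := intervalIntegral.integral_add_adjacent_intervals
    (hf.intervalIntegrable p q) (hf.intervalIntegrable q b') (μ := volume)
  rw [← A, ← B, i1, i3]; ring

lemma wavelet_integral_shift (w1 : ℝ → ℝ) (hw1c : Continuous w1)
    (hw1s : Function.support w1 ⊆ Ioo 0 1) (lam T τ : ℝ)
    (hlam : 0 < lam) (hτ : 0 ≤ τ) (hτT : τ + lam ≤ T) :
    ∫ t in (0:ℝ)..T, ((1/Real.sqrt lam) * w1 ((t - τ) / lam))^2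
      = ∫ s in (0:ℝ)..lam, ((1/Real.sqrt lam) * w1 (s / lam))^2 := by
  have hf : Continuous fun s : ℝ => ((1/Real.sqrt lam) * w1 (s / lam))^2 := by
    fun_prop
  have h0 : ∀ s, s ∉ Ioo (0:ℝ) lam → ((1/Real.sqrt lam) * w1 (s / lam))^2 = 0 := by
    intro s hs
    rcases eq_or_ne (w1 (s / lam)) 0 with h | h
    · simp [h]
    · exfalso
      have := hw1s (Function.mem_support.mpr h)
      exact hs ⟨(div_pos_iff.mp (this.1)).resolve_right (fun h' => absurd hlam (not_lt.mpr h'.2.le)) |>.1,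
        (div_lt_one hlam).mp this.2⟩
  calc ∫ t in (0:ℝ)..T, ((1/Real.sqrt lam) * w1 ((t - τ) / lam))^2
      = ∫ s in (0:ℝ)-τ..T-τ, ((1/Real.sqrt lam) * w1 (s / lam))^2 :=
        intervalIntegral.integral_comp_sub_right (fun s => ((1/Real.sqrt lam) * w1 (s / lam))^2) τ
    _ = ∫ s in (0:ℝ)..lam, ((1/Real.sqrt lam) * w1 (s / lam))^2 := by
        apply integral_ext hf h0 (by linarith) hlam.le (by linarith)

lemma fwi_decomp (w1 : ℝ → ℝ) (hw1c : Continuous w1)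
    (hw1s : Function.support w1 ⊆ Ioo 0 1) (a lam T c1 c2 : ℝ)
    (ha : 0 < a) (hlam : 0 < lam) (hc1 : 0 < c1) (hc2 : 0 < c2)
    (hT1 : a / c1 + lam ≤ T) (hT2 : a / c2 + lam ≤ T)
    (hdisj : lam ≤ |a / c1 - a / c2|) :
    ∫ t in (0:ℝ)..T,
        ((1/(2*c1)) * ((1/Real.sqrt lam) * w1 ((t - a / c1) / lam))
          - (1/(2*c2)) * ((1/Real.sqrt lam) * w1 ((t - a / c2) / lam))) ^ 2
      = ((1/(2*c1))^2 + (1/(2*c2))^2) *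
          ∫ s in (0:ℝ)..lam, ((1/Real.sqrt lam) * w1 (s / lam))^2 := by
  set τ1 := a / c1
  set τ2 := a / c2
  have mem_of_ne : ∀ (τ t : ℝ), w1 ((t - τ) / lam) ≠ 0 → τ < t ∧ t < τ + lam := by
    intro τ t h
    have hm := hw1s (Function.mem_support.mpr h)
    constructor
    · nlinarith [mul_pos hm.1 hlam, div_mul_cancel₀ (t - τ) hlam.ne']
    · linarith [(div_lt_one hlam).mp hm.2]
  have hprod : ∀ t, w1 ((t - τ1) / lam) * w1 ((t - τ2) / lam) = 0 := by
    intro t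
    by_contra h
    have h1 : w1 ((t - τ1) / lam) ≠ 0 := fun h' => h (by simp [h'])
    have h2 : w1 ((t - τ2) / lam) ≠ 0 := fun h' => h (by simp [h'])
    obtain ⟨a1, b1⟩ := mem_of_ne τ1 t h1
    obtain ⟨a2, b2⟩ := mem_of_ne τ2 t h2
    have : |τ1 - τ2| < lam := abs_lt.mpr ⟨by linarith, by linarith⟩
    linarith [hdisj]
  have hptw : ∀ t,
      ((1/(2*c1)) * ((1/Real.sqrt lam) * w1 ((t - τ1) / lam))
        - (1/(2*c2)) * ((1/Real.sqrt lam) * w1 ((t - τ2) / lam))) ^ 2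
      = (1/(2*c1))^2 * ((1/Real.sqrt lam) * w1 ((t - τ1) / lam))^2
        + (1/(2*c2))^2 * ((1/Real.sqrt lam) * w1 ((t - τ2) / lam))^2 := by
    intro t
    have := hprod t
    linear_combination (-(2 * (1/(2*c1)) * (1/(2*c2)) * (1/Real.sqrt lam)^2)) * this
  have cont1 : Continuous fun t : ℝ => (1/(2*c1))^2 * ((1/Real.sqrt lam) * w1 ((t - τ1) / lam))^2 := by fun_prop
  have cont2 : Continuous fun t : ℝ => (1/(2*c2))^2 * ((1/Real.sqrt lam) * w1 ((t - τ2) / lam))^2 := by fun_prop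
  rw [intervalIntegral.integral_congr (g := fun t =>
      (1/(2*c1))^2 * ((1/Real.sqrt lam) * w1 ((t - τ1) / lam))^2
        + (1/(2*c2))^2 * ((1/Real.sqrt lam) * w1 ((t - τ2) / lam))^2)
      (fun t _ => hptw t),
    intervalIntegral.integral_add (cont1.intervalIntegrable _ _) (cont2.intervalIntegrable _ _),
    intervalIntegral.integral_const_mul, intervalIntegral.integral_const_mul,
    wavelet_integral_shift w1 hw1c hw1s lam T τ1 hlam (div_nonneg ha.le hc1.le) hT1,
    wavelet_integral_shift w1 hw1c hw1s lam T τ2 hlam (div_nonneg ha.le hc2.le) hT2]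
  ring

/-- Theorem 1 of the paper: outside a wavelength-sized neighborhood of the target
velocity `cstar`, the FWI objective is minimized at `c = cmax`. -/
theorem fwi_spurious_minimizer_at_cmax
    (zs zr T cmin cmax cstar lam : ℝ) (w1 : ℝ → ℝ)
    (hzr : zs ≠ zr) (hT : 0 < T)
    (hcmin : 0 < cmin) (hcc : cmin ≤ cmax)
    (htransit : |zs - zr| / cmin < T)
    (hw1c : Continuous w1) (hw1s : Function.support w1 ⊆ Ioo 0 1)
    (hcstar : cstar ∈ Icc cmin cmax)
    (hlam : 0 < lam) (hlam0 : lam < T - |zs - zr| / cmin)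
    (hgap : cmax - cstar > (2 * cmax ^ 2 / |zs - zr|) * lam)
    (J : ℝ → ℝ)
    (hJ : ∀ c, J c = (1/2) * ∫ t in (0:ℝ)..T,
        ((1/(2*cstar)) * ((1/Real.sqrt lam) * w1 ((t - |zs - zr| / cstar) / lam))
          - (1/(2*c)) * ((1/Real.sqrt lam) * w1 ((t - |zs - zr| / c) / lam))) ^ 2) :
    ∀ c ∈ Icc cmin cmax, |c - cstar| > (2 * cmax ^ 2 / |zs - zr|) * lam →
      J c ≥ J cmax := by
  set a := |zs - zr| with ha_def
  have ha : 0 < a := abs_pos.mpr (sub_ne_zero.mpr hzr)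
  obtain ⟨hcs1, hcs2⟩ := hcstar
  have hcsp : 0 < cstar := lt_of_lt_of_le hcmin hcs1
  have hcmaxp : 0 < cmax := lt_of_lt_of_le hcmin hcc
  set C := ∫ s in (0:ℝ)..lam, ((1/Real.sqrt lam) * w1 (s / lam))^2 with hC_def
  have hC : 0 ≤ C :=
    intervalIntegral.integral_nonneg hlam.le (fun s _ => sq_nonneg _)
  have hTstar : a / cstar + lam ≤ T := by
    have : a / cstar ≤ a / cmin := by gcongr
    linarith
  have Jeq : ∀ c, cmin ≤ c → c ≤ cmax →
      |c - cstar| > (2 * cmax ^ 2 / a) * lam →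
      J c = (1/2) * (((1/(2*cstar))^2 + (1/(2*c))^2) * C) := by
    intro c hc1 hc2 hgt
    have hcp : 0 < c := lt_of_lt_of_le hcmin hc1
    have hTc : a / c + lam ≤ T := by
      have : a / c ≤ a / cmin := by gcongr
      linarith
    have hA : 2 * cmax ^ 2 * lam < |c - cstar| * a := by
      have h := hgt
      rw [gt_iff_lt, div_mul_eq_mul_div, div_lt_iff₀ ha] at h
      linarith
    have hdisj : lam ≤ |a / cstar - a / c| := by
      have key : a / cstar - a / c = a * (c - cstar) / (cstar * c) := by
        field_simp
      rw [key, abs_div, abs_mul, abs_of_pos ha, abs_of_pos (mul_pos hcsp hcp),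
        le_div_iff₀ (mul_pos hcsp hcp)]
      nlinarith [mul_le_mul hcs2 hc2 hcp.le hcmaxp.le, hlam, hA,
        mul_le_mul_of_nonneg_left (mul_le_mul hcs2 hc2 hcp.le hcmaxp.le) hlam.le]
    rw [hJ c, fwi_decomp w1 hw1c hw1s a lam T cstar c ha hlam hcsp hcp hTstar hTc hdisj]
  intro c hc hgt
  have hLnn : 0 ≤ (2 * cmax ^ 2 / a) * lam := by positivity
  have hgtmax : |cmax - cstar| > (2 * cmax ^ 2 / a) * lam := by
    rw [abs_of_nonneg (by linarith : (0:ℝ) ≤ cmax - cstar)]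
    exact hgap
  rw [Jeq c hc.1 hc.2 hgt, Jeq cmax hcc le_rfl hgtmax]
  have hcp : 0 < c := lt_of_lt_of_le hcmin hc.1
  have hx : (1/(2*cmax))^2 ≤ (1/(2*c))^2 := by
    have h1 : (1:ℝ)/(2*cmax) ≤ 1/(2*c) :=
      one_div_le_one_div_of_le (by linarith) (by linarith [hc.2])
    have h2 : (0:ℝ) ≤ 1/(2*cmax) := by positivity
    exact pow_le_pow_left₀ h2 h1 2
  nlinarith [mul_le_mul_of_nonneg_right hx hC]
end

section
/- Let L = 2·c_max²/|z_s − z_r|, let 0 < λ < λ₀, and suppose β < 0 and c_max − c_* > L·λ. Then for every c ∈ [c_min, c_max] with |c − c_*| > L·λ one has J_WRI^α(c) ≥ J_WRI^α(c_max); that is, c = c_max minimizes J_WRI^α over the part of [c_min, c_max] outside [c_* − Lλ, c_* + Lλ]. (Theorem 2, case β < 0.) -/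
open MeasureTheory Set



section helpers

lemma cs_integral (ν : Measure ℝ) [IsFiniteMeasure ν] {f : ℝ → ℝ}
    (hf : Integrable f ν) (hf2 : Integrable (fun x => f x ^ 2) ν) :
    (∫ x, f x ∂ν) ^ 2 ≤ (ν univ).toReal * ∫ x, f x ^ 2 ∂ν := by
  set V : ℝ := (ν univ).toReal with hV
  set I : ℝ := ∫ x, f x ∂ν with hI
  have hVnn : 0 ≤ V := ENNReal.toReal_nonneg
  have key : 0 ≤ ∫ x, (V * f x - I) ^ 2 ∂ν :=
    integral_nonneg fun x => sq_nonneg _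
  have expand : ∀ x, (V * f x - I) ^ 2 = V ^ 2 * f x ^ 2 - 2 * V * I * f x + I ^ 2 := by
    intro x; ring
  have hint : ∫ x, (V * f x - I) ^ 2 ∂ν
      = V ^ 2 * (∫ x, f x ^ 2 ∂ν) - 2 * V * I * I + I ^ 2 * V := by
    simp_rw [expand]
    have h1 : Integrable (fun x => V ^ 2 * f x ^ 2 - 2 * V * I * f x) ν := by
      exact (hf2.const_mul _).sub (hf.const_mul _)
    have h2 : Integrable (fun x => V ^ 2 * f x ^ 2) ν := hf2.const_mul _
    have h3 : Integrable (fun x => 2 * V * I * f x) ν := hf.const_mul _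
    rw [integral_add h1 (integrable_const _), integral_sub h2 h3, integral_const_mul,
      integral_const_mul, integral_const]
    simp [hV, ← hI, smul_eq_mul, Measure.real]
    ring
  rw [hint] at key
  rcases eq_or_lt_of_le hVnn with h0 | hpos
  · have : ν = 0 := by
      have : ν univ = 0 := by
        have := ENNReal.toReal_eq_zero_iff (ν univ)
        rcases this.mp (by rw [← hV, ← h0]) with h | h
        · exact h
        · exact absurd h (measure_ne_top ν univ)
      exact Measure.measure_univ_eq_zero.mp this
    simp [hI, this]
  · nlinarith [sq_nonneg I, sq_nonneg V]

lemma interval_eq_full {f : ℝ → ℝ} {T : ℝ} (hT : 0 ≤ T)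
    (hs : Function.support f ⊆ Ioo 0 T) :
    ∫ t in (0:ℝ)..T, f t = ∫ t, f t := by
  rw [intervalIntegral.integral_of_le hT]
  exact setIntegral_eq_integral_of_forall_compl_eq_zero fun x hx => by
    by_contra h
    exact hx (Ioo_subset_Ioc_self (hs h))

def shearEquiv (s : ℝ → ℝ) (hs : Measurable s) : (ℝ × ℝ) ≃ᵐ (ℝ × ℝ) where
  toFun p := (p.1, p.2 - s p.1)
  invFun p := (p.1, p.2 + s p.1)
  left_inv p := by simp
  right_inv p := by simp
  measurable_toFun := by
    exact measurable_fst.prodMk (measurable_snd.sub (hs.comp measurable_fst))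
  measurable_invFun := by
    exact measurable_fst.prodMk (measurable_snd.add (hs.comp measurable_fst))

lemma shear_preserving (ν : Measure ℝ) [SFinite ν] (s : ℝ → ℝ) (hs : Measurable s) :
    MeasurePreserving (fun p : ℝ × ℝ => (p.1, p.2 - s p.1)) (ν.prod volume) (ν.prod volume) := by
  have := MeasurePreserving.skew_product (MeasurePreserving.id ν)
    (g := fun z t => t - s z)
    (μc := (volume : Measure ℝ)) (μd := (volume : Measure ℝ))
    (by exact measurable_snd.sub (hs.comp measurable_fst))
    (Filter.Eventually.of_forall fun a => by
      simpa [sub_eq_add_neg] using map_add_right_eq_self (volume : Measure ℝ) (-s a))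
  simpa using this

lemma quad_lb {k x y : ℝ} (hk : 0 < k) : (k/(1+k)) * x^2 ≤ (x-y)^2 + k * y^2 := by
  have h1k : 0 < 1 + k := by linarith
  rw [div_mul_eq_mul_div, div_le_iff₀ h1k]
  nlinarith [sq_nonneg ((1+k)*y - x)]

lemma abs_le_one_add_sq (x : ℝ) : ‖x‖ ≤ 1 + x ^ 2 := by
  rw [Real.norm_eq_abs]
  nlinarith [sq_nonneg (|x| - 1), abs_nonneg x, sq_abs x]

end helpers

set_option maxHeartbeats 1000000 in
lemma wri_sInf_eq (zmin zmax zr T a c cstar lam α : ℝ) (w1 : ℝ → ℝ)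
    (hz : zmin < zmax) (hT : 0 < T) (hc : 0 < c) (hcs : 0 < cstar)
    (ha : 0 < a) (hlam : 0 < lam) (hα : 0 < α)
    (hw1c : Continuous w1) (hw1s : Function.support w1 ⊆ Ioo 0 1)
    (hsupc : a / c + lam ≤ T) (hsups : a / cstar + lam ≤ T)
    (hsep : lam ≤ |a / c - a / cstar|) :
    sInf { v : ℝ | ∃ g : ℝ → ℝ → ℝ,
        MemLp (fun p : ℝ × ℝ => g p.1 p.2) 2
          ((volume.restrict (Icc zmin zmax)).prod volume) ∧
        v = (1/2) * ((∫ t in (0:ℝ)..T,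
              ((1/(2*cstar)) * ((1/Real.sqrt lam) * w1 ((t - a / cstar) / lam))
                - (1/(2*c)) * ((1/Real.sqrt lam) * w1 ((t - a / c) / lam))
                - (1/(2*c)) * ∫ z in zmin..zmax, g z (t - |zr - z| / c)) ^ 2)
            + α^2 * ∫ z in zmin..zmax, ∫ t : ℝ, (g z t) ^ 2) }
      = (1/2) * ((4*α^2*c^2/(zmax - zmin)) / (1 + 4*α^2*c^2/(zmax - zmin)))
          * ((1/(4*cstar^2) + 1/(4*c^2)) * ∫ t : ℝ, (w1 t) ^ 2) := by
  have hτc : 0 < a / c := by positivity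
  have hτs : 0 < a / cstar := by positivity
  obtain ⟨Z, hZdef⟩ : ∃ x : ℝ, x = zmax - zmin := ⟨_, rfl⟩
  have hZ : 0 < Z := by rw [hZdef]; exact sub_pos.mpr hz
  obtain ⟨W, hWdef⟩ : ∃ x : ℝ, x = ∫ t : ℝ, (w1 t) ^ 2 := ⟨_, rfl⟩
  have hW : 0 ≤ W := by rw [hWdef]; exact integral_nonneg fun t => sq_nonneg _
  obtain ⟨k, hkdef⟩ : ∃ x : ℝ, x = 4*α^2*c^2/Z := ⟨_, rfl⟩
  have hk : 0 < k := by rw [hkdef]; exact div_pos (by positivity) hZ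
  have h1k : 0 < 1 + k := by linarith
  rw [← hZdef, ← hkdef, ← hWdef]
  -- the wavelet at scale lam
  set wl : ℝ → ℝ := fun t => (1/Real.sqrt lam) * w1 (t/lam) with hwl
  have hwlc : Continuous wl :=
    continuous_const.mul (hw1c.comp (continuous_id.div_const lam))
  have hwls : Function.support wl ⊆ Ioo 0 lam := by
    intro t ht
    have h1 : w1 (t/lam) ≠ 0 := by
      intro h0; apply ht; simp [hwl, h0]
    have h2 := hw1s h1
    constructor
    · have h3 : 0 < (t/lam) * lam := mul_pos h2.1 hlam
      rwa [div_mul_cancel₀ _ (ne_of_gt hlam)] at h3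
    · have := h2.2
      calc t = (t/lam) * lam := by field_simp
      _ < 1 * lam := by apply mul_lt_mul_of_pos_right h2.2 hlam
      _ = lam := one_mul lam
  have hwlint : ∫ t : ℝ, (wl t)^2 = W := by
    have he : ∀ t : ℝ, (wl t)^2 = (1/lam) * (w1 (t/lam))^2 := by
      intro t
      simp only [hwl]
      rw [mul_pow, div_pow, one_pow, Real.sq_sqrt hlam.le]
    simp_rw [he]
    rw [integral_const_mul, MeasureTheory.Measure.integral_comp_div (fun u => (w1 u)^2) lam]
    rw [abs_of_pos hlam, smul_eq_mul, hWdef]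
    field_simp
  -- residual r
  set r : ℝ → ℝ := fun t =>
    (1/(2*cstar)) * wl (t - a/cstar) - (1/(2*c)) * wl (t - a/c) with hrdef
  have hrc : Continuous r :=
    ((continuous_const.mul (hwlc.comp (continuous_id.sub continuous_const)))).sub
      ((continuous_const.mul (hwlc.comp (continuous_id.sub continuous_const))))
  have hsupshift : ∀ τ : ℝ, 0 < τ → τ + lam ≤ T →
      Function.support (fun t => wl (t - τ)) ⊆ Ioo 0 T := by
    intro τ h0 hτT t ht
    have : wl (t - τ) ≠ 0 := ht
    have h2 := hwls this
    constructor
    · linarith [h2.1]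
    · linarith [h2.2]
  have hrs : Function.support r ⊆ Ioo 0 T := by
    intro t ht
    have : r t ≠ 0 := ht
    by_cases h1 : wl (t - a/cstar) = 0
    · have h2 : wl (t - a/c) ≠ 0 := by
        intro h2; apply this; simp [hrdef, h1, h2]
      exact hsupshift (a/c) hτc hsupc h2
    · exact hsupshift (a/cstar) hτs hsups h1
  have hrcs : HasCompactSupport r := by
    apply HasCompactSupport.intro (isCompact_Icc (a := (0:ℝ)) (b := T))
    intro t ht
    by_contra h
    have := hrs h
    exact ht ⟨this.1.le, this.2.le⟩
  have hr2c : Continuous (fun t => r t ^ 2) := hrc.pow 2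
  have hr2cs : HasCompactSupport (fun t => r t ^ 2) := by
    have : (fun t => r t ^ 2) = (fun x : ℝ => x ^ 2) ∘ r := rfl
    rw [this]
    exact hrcs.comp_left (by simp)
  have hr2int : Integrable (fun t => r t ^ 2) := hr2c.integrable_of_hasCompactSupport hr2cs
  have hr2s : Function.support (fun t => r t ^ 2) ⊆ Ioo 0 T := by
    intro t ht
    apply hrs
    intro h0
    apply ht
    simp [h0]
  obtain ⟨R, hRdef⟩ : ∃ x : ℝ, x = ∫ t in (0:ℝ)..T, (r t)^2 := ⟨_, rfl⟩
  have hRfull : ∫ t : ℝ, (r t)^2 = R := by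
    rw [hRdef]; exact (interval_eq_full hT.le hr2s).symm
  -- disjoint supports
  have hdisj : ∀ t, wl (t - a/cstar) = 0 ∨ wl (t - a/c) = 0 := by
    intro t
    by_contra hcon
    push_neg at hcon
    have h1 := hwls hcon.1
    have h2 := hwls hcon.2
    have : |a / c - a / cstar| < lam := by
      rw [abs_lt]
      constructor <;> [linarith [h1.1, h2.2]; linarith [h1.2, h2.1]]
    linarith
  have hr2point : ∀ t, r t ^ 2
      = (1/(4*cstar^2)) * (wl (t - a/cstar))^2 + (1/(4*c^2)) * (wl (t - a/c))^2 := by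
    intro t
    have hc2 : (2*cstar)^2 = 4*cstar^2 := by ring
    have hcc2 : (2*c)^2 = 4*c^2 := by ring
    rcases hdisj t with h | h <;> simp only [hrdef] <;> rw [h]
    · rw [mul_zero, zero_sub, neg_sq, mul_pow]
      have e2 : (1/(2*c):ℝ)^2 = 1/(4*c^2) := by rw [div_pow]; norm_num; ring_nf
      rw [e2]; ring
    · rw [mul_zero, sub_zero, mul_pow]
      have e1 : (1/(2*cstar):ℝ)^2 = 1/(4*cstar^2) := by rw [div_pow]; norm_num; ring_nf
      rw [e1]; ring
  have hshiftint : ∀ τ : ℝ, 0 < τ → τ + lam ≤ T →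
      ∫ t in (0:ℝ)..T, (wl (t - τ))^2 = W := by
    intro τ h0 hτT
    have hsupp : Function.support (fun t => (wl (t - τ))^2) ⊆ Ioo 0 T := by
      intro t ht
      apply hsupshift τ h0 hτT
      intro h1
      apply ht
      simp [h1]
    rw [interval_eq_full hT.le hsupp]
    have : ∫ t : ℝ, (wl (t - τ))^2 = ∫ t : ℝ, (wl t)^2 :=
      integral_sub_right_eq_self (fun t => (wl t)^2) τ
    rw [this, hwlint]
  have hR : R = (1/(4*cstar^2) + 1/(4*c^2)) * W := by
    have h1 : R = ∫ t in (0:ℝ)..T,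
        ((1/(4*cstar^2)) * (wl (t - a/cstar))^2 + (1/(4*c^2)) * (wl (t - a/c))^2) := by
      rw [hRdef]
      apply intervalIntegral.integral_congr
      intro t _
      exact hr2point t
    have hic : ∀ τ : ℝ, IntervalIntegrable (fun t => (wl (t - τ))^2) volume 0 T := by
      intro τ
      exact ((hwlc.comp (continuous_id.sub continuous_const)).pow 2).intervalIntegrable 0 T
    rw [h1, intervalIntegral.integral_add ((hic _).const_mul _) ((hic _).const_mul _),
      intervalIntegral.integral_const_mul, intervalIntegral.integral_const_mul,
      hshiftint _ hτs hsups, hshiftint _ hτc hsupc]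
    ring
  -- measure setup
  set ν : Measure ℝ := volume.restrict (Icc zmin zmax) with hνdef
  haveI hνfin : IsFiniteMeasure ν := by
    constructor
    rw [hνdef, Measure.restrict_apply_univ, Real.volume_Icc]
    exact ENNReal.ofReal_lt_top
  have hνuniv : (ν univ).toReal = Z := by
    rw [hνdef, Measure.restrict_apply_univ, Real.volume_Icc,
      ENNReal.toReal_ofReal (by linarith), hZdef]
  set μ : Measure (ℝ × ℝ) := ν.prod volume with hμdef
  set s : ℝ → ℝ := fun z => |zr - z| / c with hsdef
  have hsm : Measurable s := (measurable_const.sub measurable_id).abs.div_const c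
  have hiz : ∀ f : ℝ → ℝ, (∫ z in zmin..zmax, f z) = ∫ z, f z ∂ν := by
    intro f
    rw [intervalIntegral.integral_of_le hz.le, ← integral_Icc_eq_integral_Ioc]
  set SS : Set ℝ := { v : ℝ | ∃ g : ℝ → ℝ → ℝ,
        MemLp (fun p : ℝ × ℝ => g p.1 p.2) 2
          ((volume.restrict (Icc zmin zmax)).prod volume) ∧
        v = (1/2) * ((∫ t in (0:ℝ)..T,
              ((1/(2*cstar)) * ((1/Real.sqrt lam) * w1 ((t - a / cstar) / lam))
                - (1/(2*c)) * ((1/Real.sqrt lam) * w1 ((t - a / c) / lam))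
                - (1/(2*c)) * ∫ z in zmin..zmax, g z (t - |zr - z| / c)) ^ 2)
            + α^2 * ∫ z in zmin..zmax, ∫ t : ℝ, (g z t) ^ 2) } with hSS
  have hchunkeq : ∀ t : ℝ,
      (1/(2*cstar)) * ((1/Real.sqrt lam) * w1 ((t - a / cstar) / lam))
        - (1/(2*c)) * ((1/Real.sqrt lam) * w1 ((t - a / c) / lam)) = r t := by
    intro t
    simp only [hrdef, hwl]
  -- the explicit minimizer
  obtain ⟨m, hmdef⟩ : ∃ x : ℝ, x = 2*c/(Z*(1+k)) := ⟨_, rfl⟩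
  set g0 : ℝ → ℝ → ℝ := fun z t => m * r (t + |zr - z| / c) with hg0def
  have hg0c : Continuous (fun p : ℝ × ℝ => g0 p.1 p.2) :=
    continuous_const.mul
      (hrc.comp (continuous_snd.add ((continuous_const.sub continuous_fst).abs.div_const c)))
  have hg0sec : ∀ z : ℝ, Integrable (fun t => (g0 z t)^2) volume := by
    intro z
    have hcont : Continuous (fun t => (g0 z t)^2) :=
      (continuous_const.mul (hrc.comp (continuous_id.add continuous_const))).pow 2
    apply hcont.integrable_of_hasCompactSupport
    have h1 : HasCompactSupport (fun t => r (t + |zr - z| / c)) :=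
      hrcs.comp_homeomorph (Homeomorph.addRight (|zr - z| / c))
    have h2 : (fun t => (g0 z t)^2) = (fun x : ℝ => (m * x)^2) ∘ (fun t => r (t + |zr - z| / c)) := rfl
    rw [h2]
    exact h1.comp_left (by simp)
  have hg0inner : ∀ z : ℝ, (∫ t : ℝ, (g0 z t)^2) = m^2 * R := by
    intro z
    have he : ∀ t : ℝ, (g0 z t)^2 = (fun u => m^2 * (r u)^2) (t + |zr - z| / c) := by
      intro t; simp only [hg0def]; rw [mul_pow]
    simp_rw [he]
    rw [integral_add_right_eq_self (fun u => m^2 * (r u)^2) (|zr - z| / c),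
      integral_const_mul, hRfull]
  have hmemg0 : MemLp (fun p : ℝ × ℝ => g0 p.1 p.2) 2 μ := by
    rw [memLp_two_iff_integrable_sq hg0c.aestronglyMeasurable]
    refine (integrable_prod_iff ?_).mpr ⟨?_, ?_⟩
    · exact (hg0c.pow 2).aestronglyMeasurable
    · exact Filter.Eventually.of_forall fun z => hg0sec z
    · have hnn : ∀ z : ℝ, (∫ t : ℝ, ‖(g0 z t)^2‖) = m^2 * R := by
        intro z
        rw [← hg0inner z]
        apply integral_congr_ae
        exact Filter.Eventually.of_forall fun t => by
          simp only [Real.norm_eq_abs]; exact abs_of_nonneg (sq_nonneg _)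
      simp_rw [hnn]
      exact integrable_const _
  have hZm : (1/(2*c)) * (Z * m) = 1/(1+k) := by
    rw [hmdef]
    field_simp
  have hinner1 : ∀ t : ℝ, (∫ z in zmin..zmax, g0 z (t - |zr - z| / c)) = Z * (m * r t) := by
    intro t
    have hcongr : ∀ z : ℝ, g0 z (t - |zr - z| / c) = m * r t := by
      intro z; simp only [hg0def]; rw [sub_add_cancel]
    rw [intervalIntegral.integral_congr (g := fun _ => m * r t) (fun z _ => hcongr z),
      intervalIntegral.integral_const, smul_eq_mul, ← hZdef]
  have hkZ : k * Z = 4*α^2*c^2 := by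
    rw [hkdef]; exact div_mul_cancel₀ _ hZ.ne'
  have hco : (k/(1+k))^2 + α^2*(Z*m^2) = k/(1+k) := by
    have hZne : Z ≠ 0 := hZ.ne'
    have h1kne : (1+k) ≠ 0 := h1k.ne'
    have h1 : α^2*(Z*m^2) = k/(1+k)^2 := by
      rw [hmdef]
      field_simp
      linear_combination (-1:ℝ)*hkZ
    rw [h1]
    field_simp
    ring
  have e1 : ∀ t : ℝ,
      (1/(2*cstar)) * ((1/Real.sqrt lam) * w1 ((t - a / cstar) / lam))
        - (1/(2*c)) * ((1/Real.sqrt lam) * w1 ((t - a / c) / lam))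
        - (1/(2*c)) * (∫ z in zmin..zmax, g0 z (t - |zr - z| / c))
      = (k/(1+k)) * r t := by
    intro t
    rw [hinner1 t, hchunkeq t]
    have h3 : (1/(2*c)) * (Z * (m * r t)) = (1/(1+k)) * r t := by
      rw [← hZm]; ring
    rw [h3]
    field_simp
    ring
  have hB : (∫ z in zmin..zmax, ∫ t : ℝ, (g0 z t)^2) = Z * (m^2*R) := by
    rw [intervalIntegral.integral_congr (g := fun _ => m^2*R) (fun z _ => hg0inner z),
      intervalIntegral.integral_const, smul_eq_mul, ← hZdef]
  have hveq : (1/2)*(k/(1+k))*R = (1/2) * ((∫ t in (0:ℝ)..T,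
              ((1/(2*cstar)) * ((1/Real.sqrt lam) * w1 ((t - a / cstar) / lam))
                - (1/(2*c)) * ((1/Real.sqrt lam) * w1 ((t - a / c) / lam))
                - (1/(2*c)) * ∫ z in zmin..zmax, g0 z (t - |zr - z| / c)) ^ 2)
            + α^2 * ∫ z in zmin..zmax, ∫ t : ℝ, (g0 z t) ^ 2) := by
    simp_rw [e1]
    rw [hB]
    simp_rw [mul_pow]
    rw [intervalIntegral.integral_const_mul, ← hRdef]
    linear_combination (-(1:ℝ)/2)*R*hco
  have hmemb : (1/2)*(k/(1+k))*R ∈ SS := ⟨g0, hmemg0, hveq⟩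
  -- lower bound
  have hlow : ∀ v ∈ SS, (1/2)*(k/(1+k))*R ≤ v := by
    rintro v ⟨g, hg, hv⟩
    have hG2 : Integrable (fun p : ℝ × ℝ => (g p.1 p.2) ^ 2) μ := hg.integrable_sq
    set H : ℝ × ℝ → ℝ := fun p => g p.1 (p.2 - s p.1) with hHdef
    have hΨ : MeasurePreserving (fun p : ℝ × ℝ => (p.1, p.2 - s p.1)) μ μ :=
      shear_preserving ν s hsm
    have hemb : MeasurableEmbedding (fun p : ℝ × ℝ => (p.1, p.2 - s p.1)) :=
      (shearEquiv s hsm).measurableEmbedding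
    have hH2 : Integrable (fun p : ℝ × ℝ => H p ^ 2) μ := by
      exact (hΨ.integrable_comp_emb hemb (g := fun p : ℝ × ℝ => (g p.1 p.2) ^ 2)).mpr hG2
    have hN2 : ∫ p : ℝ × ℝ, H p ^ 2 ∂μ = ∫ p : ℝ × ℝ, (g p.1 p.2) ^ 2 ∂μ :=
      hΨ.integral_comp hemb (fun p : ℝ × ℝ => (g p.1 p.2) ^ 2)
    obtain ⟨N, hNdef⟩ : ∃ x : ℝ, x = ∫ p : ℝ × ℝ, (g p.1 p.2) ^ 2 ∂μ := ⟨_, rfl⟩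
    have hBN : (∫ z in zmin..zmax, ∫ t : ℝ, (g z t) ^ 2) = N := by
      rw [hiz (fun z => ∫ t : ℝ, (g z t)^2), hNdef]
      exact integral_integral (f := fun z t => (g z t)^2) hG2
    have hHm : AEStronglyMeasurable H μ := by
      exact hg.aestronglyMeasurable.comp_quasiMeasurePreserving hΨ.quasiMeasurePreserving
    have hHswap : AEStronglyMeasurable (fun p : ℝ × ℝ => H (p.2, p.1)) (volume.prod ν) := by
      exact hHm.prod_swap
    have hsecm : ∀ᵐ t : ℝ ∂volume, AEStronglyMeasurable (fun z => H (z, t)) ν :=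
      hHswap.prodMk_left
    have hsec2 : ∀ᵐ t : ℝ ∂volume, Integrable (fun z => H (z, t) ^ 2) ν :=
      Integrable.prod_left_ae (f := fun p : ℝ × ℝ => H p ^ 2) hH2
    obtain ⟨φ, hφdef⟩ : ∃ φ : ℝ → ℝ, φ = fun t => ∫ z, H (z, t) ^ 2 ∂ν := ⟨_, rfl⟩
    have hφnn : ∀ t, 0 ≤ φ t := by
      intro t; rw [hφdef]; exact integral_nonneg fun z => sq_nonneg _
    have hφint : Integrable φ volume := by
      have h1 : Integrable (fun p : ℝ × ℝ => H (p.2, p.1) ^ 2) (volume.prod ν) := by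
        exact hH2.swap
      have h2 := h1.integral_norm_prod_left
      apply h2.congr
      apply Filter.Eventually.of_forall
      intro t
      rw [hφdef]
      exact integral_congr_ae (Filter.Eventually.of_forall fun z => by
        simp only [Real.norm_eq_abs]; exact abs_of_nonneg (sq_nonneg _))
    have hφtot : ∫ t : ℝ, φ t = N := by
      have h1 : ∫ z, (∫ t : ℝ, H (z, t) ^ 2) ∂ν = ∫ p : ℝ × ℝ, H p ^ 2 ∂μ :=
        integral_integral (f := fun z t => H (z, t)^2) hH2
      have h2 : ∫ z, (∫ t : ℝ, H (z, t) ^ 2) ∂ν = ∫ t : ℝ, (∫ z, H (z, t) ^ 2 ∂ν) :=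
        integral_integral_swap (f := fun z t => H (z, t)^2) hH2
      rw [hφdef, ← h2, h1, hN2, hNdef]
    obtain ⟨hh, hhdef⟩ : ∃ F : ℝ → ℝ, F = fun t => (1/(2*c)) * ∫ z, H (z, t) ∂ν := ⟨_, rfl⟩
    have hhint_eq : ∀ t : ℝ,
        (1/(2*c)) * (∫ z in zmin..zmax, g z (t - |zr - z| / c)) = hh t := by
      intro t
      rw [hhdef, hiz (fun z => g z (t - |zr - z| / c))]
    have hhm : AEStronglyMeasurable hh volume := by
      rw [hhdef]
      exact (hHswap.integral_prod_right').const_mul _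
    have hCS : ∀ᵐ t : ℝ ∂volume, (hh t)^2 ≤ (Z/(4*c^2)) * φ t := by
      filter_upwards [hsecm, hsec2] with t h1 h2
      have hint1 : Integrable (fun z => H (z, t)) ν := by
        apply Integrable.mono' ((integrable_const (1:ℝ)).add h2) h1
        exact Filter.Eventually.of_forall fun z => abs_le_one_add_sq _
      have hcs := cs_integral ν hint1 h2
      rw [hνuniv] at hcs
      rw [hhdef, hφdef]
      have e3 : (1/(2*c):ℝ)^2 = 1/(4*c^2) := by rw [div_pow]; norm_num; ring_nf
      have e2 : ((1/(2*c)) * ∫ z, H (z, t) ∂ν)^2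
          = (1/(4*c^2)) * (∫ z, H (z, t) ∂ν)^2 := by
        rw [mul_pow, e3]
      rw [e2]
      calc (1/(4*c^2)) * (∫ z, H (z, t) ∂ν)^2
          ≤ (1/(4*c^2)) * (Z * ∫ z, H (z, t)^2 ∂ν) :=
            mul_le_mul_of_nonneg_left hcs (by positivity)
        _ = (Z/(4*c^2)) * ∫ z, H (z, t)^2 ∂ν := by ring
    have hh2int : Integrable (fun t => hh t ^ 2) volume := by
      apply Integrable.mono' (hφint.const_mul (Z/(4*c^2)))
      · have he : (fun t => hh t ^ 2) = fun t => hh t * hh t := by funext t; ring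
        rw [he]; exact hhm.mul hhm
      · filter_upwards [hCS] with t ht
        rw [Real.norm_eq_abs, abs_of_nonneg (sq_nonneg _)]
        exact ht
    haveI : IsFiniteMeasure (volume.restrict (Ioc (0:ℝ) T)) := by
      constructor
      rw [Measure.restrict_apply_univ, Real.volume_Ioc]
      exact ENNReal.ofReal_lt_top
    have hIoc_bound : ∫ t in Ioc (0:ℝ) T, hh t ^ 2 ≤ (Z/(4*c^2)) * N := by
      calc ∫ t in Ioc (0:ℝ) T, hh t ^ 2
          ≤ ∫ t in Ioc (0:ℝ) T, (Z/(4*c^2)) * φ t := by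
            apply integral_mono_ae (hh2int.restrict) ((hφint.const_mul _).restrict)
            exact ae_restrict_of_ae hCS
        _ ≤ ∫ t : ℝ, (Z/(4*c^2)) * φ t := by
            apply setIntegral_le_integral (hφint.const_mul _)
            exact Filter.Eventually.of_forall fun t =>
              mul_nonneg (by positivity) (hφnn t)
        _ = (Z/(4*c^2)) * N := by rw [integral_const_mul, hφtot]
    have hhint : Integrable hh (volume.restrict (Ioc (0:ℝ) T)) := by
      apply Integrable.mono' ((integrable_const (1:ℝ)).add (hh2int.restrict))
      · exact hhm.restrict
      · exact Filter.Eventually.of_forall fun t => abs_le_one_add_sq _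
    have hrh2int : Integrable (fun t => (r t - hh t)^2) (volume.restrict (Ioc (0:ℝ) T)) := by
      apply Integrable.mono'
        (((hr2int.restrict (s := Ioc (0:ℝ) T)).const_mul 2).add ((hh2int.restrict).const_mul 2))
      · have he : (fun t => (r t - hh t) ^ 2) = fun t => (r t - hh t) * (r t - hh t) := by
          funext t; ring
        rw [he]
        exact ((hrc.aestronglyMeasurable.restrict).sub hhm.restrict).mul
          ((hrc.aestronglyMeasurable.restrict).sub hhm.restrict)
      · exact Filter.Eventually.of_forall fun t => by
          rw [Real.norm_eq_abs, abs_of_nonneg (sq_nonneg _)]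
          simp only [Pi.add_apply]
          nlinarith [sq_nonneg (r t + hh t)]
    have hRIoc : ∫ t in Ioc (0:ℝ) T, r t ^ 2 = R := by
      rw [hRdef, intervalIntegral.integral_of_le hT.le]
    have hkey2 : (k/(1+k)) * R
        ≤ (∫ t in Ioc (0:ℝ) T, (r t - hh t)^2) + k * ∫ t in Ioc (0:ℝ) T, hh t ^ 2 := by
      have h1 : ∫ t in Ioc (0:ℝ) T, (k/(1+k)) * r t ^ 2
          ≤ ∫ t in Ioc (0:ℝ) T, ((r t - hh t)^2 + k * hh t ^ 2) := by
        apply integral_mono_ae ((hr2int.restrict).const_mul _)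
          (hrh2int.add ((hh2int.restrict).const_mul k))
        exact ae_of_all _ fun t => quad_lb hk
      rw [integral_add hrh2int ((hh2int.restrict).const_mul k)] at h1
      rw [integral_const_mul, integral_const_mul, hRIoc] at h1
      exact h1
    have hαN : k * (∫ t in Ioc (0:ℝ) T, hh t ^ 2) ≤ α^2 * N := by
      calc k * (∫ t in Ioc (0:ℝ) T, hh t ^ 2) ≤ k * ((Z/(4*c^2)) * N) :=
          mul_le_mul_of_nonneg_left hIoc_bound hk.le
      _ = (k * Z) * (N/(4*c^2)) := by ring
      _ = α^2 * N := by rw [hkZ]; field_simp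
    have hfirst : (∫ t in (0:ℝ)..T,
          ((1/(2*cstar)) * ((1/Real.sqrt lam) * w1 ((t - a / cstar) / lam))
            - (1/(2*c)) * ((1/Real.sqrt lam) * w1 ((t - a / c) / lam))
            - (1/(2*c)) * ∫ z in zmin..zmax, g z (t - |zr - z| / c)) ^ 2)
        = ∫ t in Ioc (0:ℝ) T, (r t - hh t)^2 := by
      rw [intervalIntegral.integral_of_le hT.le]
      apply integral_congr_ae
      apply Filter.Eventually.of_forall
      intro t
      show ((1/(2*cstar)) * ((1/Real.sqrt lam) * w1 ((t - a / cstar) / lam))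
            - (1/(2*c)) * ((1/Real.sqrt lam) * w1 ((t - a / c) / lam))
            - (1/(2*c)) * ∫ z in zmin..zmax, g z (t - |zr - z| / c)) ^ 2
          = (r t - hh t)^2
      rw [hhint_eq t, hchunkeq t]
    rw [hv, hfirst, hBN]
    linarith [hkey2, hαN]
  -- conclusion
  have hfin : sInf SS = (1/2)*(k/(1+k))*R :=
    le_antisymm (csInf_le ⟨(1/2)*(k/(1+k))*R, fun v hv => hlow v hv⟩ hmemb)
      (le_csInf ⟨_, hmemb⟩ hlow)
  rw [hSS] at hfin
  rw [hfin, hR]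

lemma coef_mono (Z α cstar c cmax W : ℝ) (hZ : 0 < Z) (hα : 0 < α) (hcs : 0 < cstar)
    (hc : 0 < c) (hcm : c ≤ cmax) (hβ : Z < 4*α^2*cstar^2) (hW : 0 ≤ W) :
    (1/2) * ((4*α^2*cmax^2/Z) / (1 + 4*α^2*cmax^2/Z)) * ((1/(4*cstar^2) + 1/(4*cmax^2)) * W)
      ≤ (1/2) * ((4*α^2*c^2/Z) / (1 + 4*α^2*c^2/Z)) * ((1/(4*cstar^2) + 1/(4*c^2)) * W) := by
  have hcmax : 0 < cmax := lt_of_lt_of_le hc hcm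
  have key : ∀ x : ℝ, 0 < x →
      (4*α^2*x^2/Z)/(1+4*α^2*x^2/Z) * (1/(4*cstar^2)+1/(4*x^2))
        = α^2*(x^2+cstar^2)/(cstar^2*(Z+4*α^2*x^2)) := by
    intro x hx
    have h1 : (1:ℝ) + 4*α^2*x^2/Z ≠ 0 := by positivity
    have h2 : Z + 4*α^2*x^2 ≠ 0 := by positivity
    field_simp
  have hqq : (4*α^2*cmax^2/Z)/(1+4*α^2*cmax^2/Z) * (1/(4*cstar^2)+1/(4*cmax^2))
      ≤ (4*α^2*c^2/Z)/(1+4*α^2*c^2/Z) * (1/(4*cstar^2)+1/(4*c^2)) := by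
    rw [key c hc, key cmax hcmax]
    rw [div_le_div_iff₀ (by positivity) (by positivity)]
    have hc2 : c^2 ≤ cmax^2 := by nlinarith
    nlinarith [mul_nonneg (sub_nonneg.mpr hc2) (sub_nonneg.mpr hβ.le), sq_nonneg α,
      mul_pos hα (mul_pos hα (mul_pos hcs hcs))]
  nlinarith [mul_le_mul_of_nonneg_right hqq hW]


/-- Theorem 2 of the paper, case `β < 0`: outside a wavelength-sized neighborhood of
the target velocity, the WRI objective is minimized at `c = cmax`. -/
theorem wri_spurious_minimizer_at_cmax
    (zs zr zmin zmax T cmin cmax cstar lam α : ℝ) (w1 : ℝ → ℝ)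
    (hzr : zs ≠ zr) (hz : zmin < zmax) (hT : 0 < T)
    (hcmin : 0 < cmin) (hcc : cmin ≤ cmax)
    (htransit : |zs - zr| / cmin < T)
    (hw1c : Continuous w1) (hw1s : Function.support w1 ⊆ Ioo 0 1)
    (hcstar : cstar ∈ Icc cmin cmax)
    (hlam : 0 < lam) (hlam0 : lam < T - |zs - zr| / cmin)
    (hα : 0 < α)
    (hβ : (zmax - zmin) / cstar^2 - 4 * α^2 < 0)
    (hgap : cmax - cstar > (2 * cmax ^ 2 / |zs - zr|) * lam)
    (JW : ℝ → ℝ)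
    (hJW : ∀ c, JW c = sInf { v : ℝ | ∃ g : ℝ → ℝ → ℝ,
        MemLp (fun p : ℝ × ℝ => g p.1 p.2) 2
          ((volume.restrict (Icc zmin zmax)).prod volume) ∧
        v = (1/2) * ((∫ t in (0:ℝ)..T,
              ((1/(2*cstar)) * ((1/Real.sqrt lam) * w1 ((t - |zs - zr| / cstar) / lam))
                - (1/(2*c)) * ((1/Real.sqrt lam) * w1 ((t - |zs - zr| / c) / lam))
                - (1/(2*c)) * ∫ z in zmin..zmax, g z (t - |zr - z| / c)) ^ 2)
            + α^2 * ∫ z in zmin..zmax, ∫ t : ℝ, (g z t) ^ 2) }) :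
    ∀ c ∈ Icc cmin cmax, |c - cstar| > (2 * cmax ^ 2 / |zs - zr|) * lam →
      JW c ≥ JW cmax := by
  intro c hcIcc hgapc
  have ha : 0 < |zs - zr| := abs_pos.mpr (sub_ne_zero.mpr hzr)
  have hcpos : 0 < c := lt_of_lt_of_le hcmin hcIcc.1
  have hcspos : 0 < cstar := lt_of_lt_of_le hcmin hcstar.1
  have hcmaxpos : 0 < cmax := lt_of_lt_of_le hcmin hcc
  have hLlam : 0 < (2 * cmax ^ 2 / |zs - zr|) * lam := by positivity
  have hsup : ∀ x : ℝ, cmin ≤ x → 0 < x → |zs - zr| / x + lam ≤ T := by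
    intro x hx hxpos
    have h1 : |zs - zr| / x ≤ |zs - zr| / cmin :=
      div_le_div_of_nonneg_left ha.le hcmin hx
    linarith
  have hsep : ∀ x : ℝ, 0 < x → x ≤ cmax → |x - cstar| > (2 * cmax ^ 2 / |zs - zr|) * lam →
      lam ≤ |(|zs - zr|) / x - |zs - zr| / cstar| := by
    intro x hxpos hxle hgx
    have h1 : |zs - zr| / x - |zs - zr| / cstar = |zs - zr| * (cstar - x) / (x * cstar) := by
      field_simp
    rw [h1, abs_div, abs_mul, abs_of_pos ha, abs_of_pos (mul_pos hxpos hcspos)]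
    rw [le_div_iff₀ (mul_pos hxpos hcspos)]
    have h2 : 2 * cmax ^ 2 * lam < |x - cstar| * |zs - zr| := by
      have := (div_lt_iff₀ ha).mp (by
        rw [div_mul_eq_mul_div] at hgx
        exact hgx)
      linarith
    have h3 : x * cstar ≤ cmax^2 := by nlinarith [hcstar.2]
    have h4 : |cstar - x| = |x - cstar| := abs_sub_comm _ _
    rw [h4]
    nlinarith [abs_nonneg (x - cstar)]
  have hβ' : zmax - zmin < 4*α^2*cstar^2 := by
    have h1 : ((zmax - zmin) / cstar^2 - 4 * α^2) * cstar^2 < 0 :=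
      mul_neg_of_neg_of_pos hβ (by positivity)
    have h2 : (zmax - zmin) / cstar^2 * cstar^2 = zmax - zmin := by field_simp
    nlinarith [h1, h2]
  rw [hJW c, hJW cmax]
  rw [wri_sInf_eq zmin zmax zr T (|zs - zr|) c cstar lam α w1 hz hT hcpos hcspos ha hlam hα
    hw1c hw1s (hsup c hcIcc.1 hcpos) (hsup cstar hcstar.1 hcspos)
    (hsep c hcpos hcIcc.2 hgapc)]
  rw [wri_sInf_eq zmin zmax zr T (|zs - zr|) cmax cstar lam α w1 hz hT hcmaxpos hcspos ha hlam hα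
    hw1c hw1s (hsup cmax hcc hcmaxpos) (hsup cstar hcstar.1 hcspos)
    (hsep cmax hcmaxpos le_rfl (by rw [abs_of_pos (by linarith)]; exact hgap))]
  exact coef_mono (zmax - zmin) α cstar c cmax (∫ t : ℝ, (w1 t)^2) (sub_pos.mpr hz) hα hcspos
    hcpos hcIcc.2 hβ' (integral_nonneg fun t => sq_nonneg _)
end

section
/- Let L = 2·c_max²/|z_s − z_r| and let 0 < λ < λ₀. Then for every c ∈ [c_min, c_max] with |c − c_*| > L·λ, the FWI objective takes the explicit value J_FWI(c) = (1/2)·(1/(4c²) + 1/(4c_*²))·‖w₁‖²_{L²(ℝ)}. (Equation 18 of the paper.) -/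
open MeasureTheory Set

/-- Equation 18 of the paper: explicit value of the FWI objective outside a
wavelength-sized neighborhood of the target velocity. -/
theorem fwi_explicit_value_outside_window
    (zs zr T cmin cmax cstar lam : ℝ) (w1 : ℝ → ℝ)
    (hzr : zs ≠ zr) (hT : 0 < T)
    (hcmin : 0 < cmin) (hcc : cmin ≤ cmax)
    (htransit : |zs - zr| / cmin < T)
    (hw1c : Continuous w1) (hw1s : Function.support w1 ⊆ Ioo 0 1)
    (hcstar : cstar ∈ Icc cmin cmax)
    (hlam : 0 < lam) (hlam0 : lam < T - |zs - zr| / cmin)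
    (J : ℝ → ℝ)
    (hJ : ∀ c, J c = (1/2) * ∫ t in (0:ℝ)..T,
        ((1/(2*cstar)) * ((1/Real.sqrt lam) * w1 ((t - |zs - zr| / cstar) / lam))
          - (1/(2*c)) * ((1/Real.sqrt lam) * w1 ((t - |zs - zr| / c) / lam))) ^ 2) :
    ∀ c ∈ Icc cmin cmax, |c - cstar| > (2 * cmax ^ 2 / |zs - zr|) * lam →
      J c = (1/2) * (1/(4*c^2) + 1/(4*cstar^2)) * ∫ t : ℝ, (w1 t) ^ 2 := by
  intro c hc hdist
  set D := |zs - zr| with hD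
  have hDpos : 0 < D := abs_pos.mpr (sub_ne_zero.mpr hzr)
  have hcpos : 0 < c := lt_of_lt_of_le hcmin hc.1
  have hcspos : 0 < cstar := lt_of_lt_of_le hcmin hcstar.1
  have hlamne : lam ≠ 0 := ne_of_gt hlam
  -- travel-time window helper
  have hwindow : ∀ b : ℝ, b ∈ Icc cmin cmax → ∀ t : ℝ,
      w1 ((t - D / b) / lam) ≠ 0 → D / b < t ∧ t < D / b + lam := by
    intro b hb t ht
    have m : (t - D / b) / lam ∈ Ioo (0:ℝ) 1 := hw1s ht
    have h1 : 0 * lam < t - D / b := (lt_div_iff₀ hlam).mp m.1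
    have h2 : t - D / b < lam := by
      have := (div_lt_one hlam).mp m.2; linarith
    constructor <;> linarith
  -- separation of travel times
  have hsep : lam < |D / c - D / cstar| := by
    have hrew : D / c - D / cstar = D * (cstar - c) / (c * cstar) := by
      field_simp
    rw [hrew, abs_div, abs_mul, abs_of_pos hDpos,
      abs_of_pos (mul_pos hcpos hcspos)]
    rw [lt_div_iff₀ (mul_pos hcpos hcspos)]
    have h1 : D * ((2 * cmax ^ 2 / D) * lam) = 2 * cmax ^ 2 * lam := by
      field_simp
    have h2 : 2 * cmax ^ 2 * lam < D * |c - cstar| := by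
      calc 2 * cmax ^ 2 * lam = D * ((2 * cmax ^ 2 / D) * lam) := h1.symm
        _ < D * |c - cstar| := (mul_lt_mul_iff_right₀ hDpos).mpr hdist
    have h3 : |cstar - c| = |c - cstar| := abs_sub_comm _ _
    have h4 : c * cstar ≤ cmax * cmax :=
      mul_le_mul hc.2 hcstar.2 hcspos.le (le_trans hcpos.le hc.2)
    nlinarith [abs_nonneg (c - cstar), hlam]
  -- the product of the two shifted wavelets vanishes pointwise
  have hprod : ∀ t : ℝ,
      w1 ((t - D / cstar) / lam) * w1 ((t - D / c) / lam) = 0 := by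
    intro t
    by_contra h
    have h1 := hwindow cstar hcstar t (left_ne_zero_of_mul h)
    have h2 := hwindow c hc t (right_ne_zero_of_mul h)
    have : |D / c - D / cstar| < lam := by
      rw [abs_sub_lt_iff]; constructor <;> linarith [h1.1, h1.2, h2.1, h2.2]
    linarith
  -- integral of a single shifted, scaled squared wavelet
  have hsingle : ∀ b : ℝ, b ∈ Icc cmin cmax →
      ∫ t in (0:ℝ)..T, (w1 ((t - D / b) / lam)) ^ 2
        = lam * ∫ t : ℝ, (w1 t) ^ 2 := by
    intro b hb
    have hbpos : 0 < b := lt_of_lt_of_le hcmin hb.1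
    have hτpos : 0 < D / b := div_pos hDpos hbpos
    have hτT : D / b + lam ≤ T := by
      have h1 : D / b ≤ D / cmin := div_le_div_of_nonneg_left hDpos.le hcmin hb.1
      linarith
    rw [intervalIntegral.integral_of_le hT.le]
    rw [setIntegral_eq_integral_of_forall_compl_eq_zero (fun t ht => ?_)]
    · have h1 : (∫ t : ℝ, (fun s => (w1 (s / lam)) ^ 2) (t - D / b))
          = ∫ t : ℝ, (w1 (t / lam)) ^ 2 :=
        integral_sub_right_eq_self (fun s => (w1 (s / lam)) ^ 2) (D / b)
      have h2 : (∫ t : ℝ, (fun s => (w1 s) ^ 2) (t / lam))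
          = |lam| • ∫ t : ℝ, (w1 t) ^ 2 :=
        MeasureTheory.Measure.integral_comp_div (fun s => (w1 s) ^ 2) lam
      simp only at h1 h2
      rw [h1, h2, abs_of_pos hlam, smul_eq_mul]
    · by_contra hne
      have := hwindow b hb t (by
        intro h0; exact hne (by rw [h0]; ring))
      simp only [mem_Ioc, not_and_or, not_lt, not_le] at ht
      rcases ht with ht | ht <;> linarith [this.1, this.2]
  -- expand the square pointwise
  have hpt : ∀ t : ℝ,
      ((1/(2*cstar)) * ((1/Real.sqrt lam) * w1 ((t - D / cstar) / lam))
        - (1/(2*c)) * ((1/Real.sqrt lam) * w1 ((t - D / c) / lam))) ^ 2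
      = ((1/(4*cstar^2)) * (1/lam)) * (w1 ((t - D / cstar) / lam)) ^ 2
        + ((1/(4*c^2)) * (1/lam)) * (w1 ((t - D / c) / lam)) ^ 2 := by
    intro t
    have hsq : (1/Real.sqrt lam) ^ 2 = 1/lam := by
      rw [div_pow, one_pow, Real.sq_sqrt hlam.le]
    have h0 := hprod t
    linear_combination ((1/(4*cstar^2)) * (w1 ((t - D / cstar) / lam)) ^ 2
        + (1/(4*c^2)) * (w1 ((t - D / c) / lam)) ^ 2) * hsq
      - (2 * (1/(2*cstar)) * (1/(2*c)) * (1/Real.sqrt lam) ^ 2) * h0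
  -- integrability of the two pieces
  have hcA : Continuous fun t : ℝ =>
      ((1/(4*cstar^2)) * (1/lam)) * (w1 ((t - D / cstar) / lam)) ^ 2 := by
    apply continuous_const.mul
    exact (hw1c.comp (by fun_prop)).pow 2
  have hcB : Continuous fun t : ℝ =>
      ((1/(4*c^2)) * (1/lam)) * (w1 ((t - D / c) / lam)) ^ 2 := by
    apply continuous_const.mul
    exact (hw1c.comp (by fun_prop)).pow 2
  rw [hJ c]
  rw [intervalIntegral.integral_congr (g := fun t =>
      ((1/(4*cstar^2)) * (1/lam)) * (w1 ((t - D / cstar) / lam)) ^ 2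
        + ((1/(4*c^2)) * (1/lam)) * (w1 ((t - D / c) / lam)) ^ 2)
      (fun t _ => hpt t)]
  rw [intervalIntegral.integral_add (hcA.intervalIntegrable 0 T)
      (hcB.intervalIntegrable 0 T)]
  rw [intervalIntegral.integral_const_mul, intervalIntegral.integral_const_mul]
  rw [hsingle cstar hcstar, hsingle c hc]
  field_simp
  ring
end

section
/- Let L = 2·c_max²/|z_s − z_r| and let 0 < λ < λ₀. If c, c_* ∈ [c_min, c_max] satisfy |c − c_*| > L·λ, then the functions S_p[c]w_λ and S_p[c_*]w_λ have disjoint supports in [0,T], and hence are orthogonal in L²([0,T]): ∫_0^T (S_p[c]w_λ)(t)·(S_p[c_*]w_λ)(t) dt = 0. -/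
open MeasureTheory Set

lemma supp_shift (c lam tau : ℝ) (w1 : ℝ → ℝ) (hlam : 0 < lam)
    (hw1s : Function.support w1 ⊆ Ioo 0 1) :
    Function.support (fun t : ℝ =>
      (1/(2*c)) * ((1/Real.sqrt lam) * w1 ((t - tau) / lam))) ⊆ Ioo tau (tau + lam) := by
  intro t ht
  have hw : w1 ((t - tau) / lam) ≠ 0 := by
    intro h
    apply ht
    simp [h]
  have hmem : (t - tau) / lam ∈ Ioo (0:ℝ) 1 := hw1s hw
  obtain ⟨h1, h2⟩ := hmem
  have h1' : 0 < t - tau := by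
    rcases div_pos_iff.mp h1 with ⟨h, _⟩ | ⟨_, h⟩
    · linarith
    · linarith
  have h2' : t - tau < lam := by
    have := (div_lt_one hlam).mp h2
    linarith
  exact ⟨by linarith, by linarith⟩

/-- If `|c - cstar| > L·lam` then the traces predicted with velocities `c` and `cstar`
have disjoint supports, hence are orthogonal in `L²([0,T])`. -/
theorem predicted_traces_disjoint_and_orthogonal
    (zs zr T cmin cmax cstar c lam : ℝ) (w1 : ℝ → ℝ)
    (hzr : zs ≠ zr) (hT : 0 < T)
    (hcmin : 0 < cmin) (hcc : cmin ≤ cmax)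
    (htransit : |zs - zr| / cmin < T)
    (hw1c : Continuous w1) (hw1s : Function.support w1 ⊆ Ioo 0 1)
    (hlam : 0 < lam) (hlam0 : lam < T - |zs - zr| / cmin)
    (hc : c ∈ Icc cmin cmax) (hcstar : cstar ∈ Icc cmin cmax)
    (hsep : |c - cstar| > (2 * cmax ^ 2 / |zs - zr|) * lam) :
    Disjoint
      (Function.support (fun t : ℝ =>
        (1/(2*c)) * ((1/Real.sqrt lam) * w1 ((t - |zs - zr| / c) / lam))))
      (Function.support (fun t : ℝ =>
        (1/(2*cstar)) * ((1/Real.sqrt lam) * w1 ((t - |zs - zr| / cstar) / lam)))) ∧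
    (∫ t in (0:ℝ)..T,
        ((1/(2*c)) * ((1/Real.sqrt lam) * w1 ((t - |zs - zr| / c) / lam))) *
        ((1/(2*cstar)) * ((1/Real.sqrt lam) * w1 ((t - |zs - zr| / cstar) / lam)))) = 0 := by
  set D := |zs - zr| with hD
  have hDpos : 0 < D := abs_pos.mpr (sub_ne_zero.mpr hzr)
  have hc0 : 0 < c := lt_of_lt_of_le hcmin hc.1
  have hcs0 : 0 < cstar := lt_of_lt_of_le hcmin hcstar.1
  have hcmax : 0 < cmax := lt_of_lt_of_le hcmin hcc
  -- separation of arrival times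
  have htau : |D / c - D / cstar| > lam := by
    have h1 : D / c - D / cstar = D * (cstar - c) / (c * cstar) := by
      field_simp
    rw [h1, abs_div, abs_mul, abs_of_pos hDpos, abs_of_pos (mul_pos hc0 hcs0)]
    rw [gt_iff_lt, lt_div_iff₀ (mul_pos hc0 hcs0)]
    have hcc2 : c * cstar ≤ cmax ^ 2 := by nlinarith [hc.2, hcstar.2]
    have habs : |cstar - c| = |c - cstar| := abs_sub_comm _ _
    rw [habs]
    have hsep' : 2 * cmax ^ 2 * lam < D * |c - cstar| := by
      have h := hsep
      rw [div_mul_eq_mul_div, gt_iff_lt, div_lt_iff₀ hDpos] at h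
      nlinarith [h]
    nlinarith [abs_nonneg (c - cstar), hlam, mul_pos hc0 hcs0]
  have hdisj : Disjoint (Ioo (D/c) (D/c + lam)) (Ioo (D/cstar) (D/cstar + lam)) := by
    rw [Set.disjoint_left]
    intro t ht1 ht2
    have hlt : |D / c - D / cstar| < lam := by
      rw [abs_sub_lt_iff]
      exact ⟨by linarith [ht1.1, ht1.2, ht2.1, ht2.2],
             by linarith [ht1.1, ht1.2, ht2.1, ht2.2]⟩
    linarith
  have hs1 := supp_shift c lam (D/c) w1 hlam hw1s
  have hs2 := supp_shift cstar lam (D/cstar) w1 hlam hw1s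
  have hsupp := Set.disjoint_of_subset hs1 hs2 hdisj
  refine ⟨hsupp, ?_⟩
  have hzero : ∀ t : ℝ,
      ((1/(2*c)) * ((1/Real.sqrt lam) * w1 ((t - D / c) / lam))) *
      ((1/(2*cstar)) * ((1/Real.sqrt lam) * w1 ((t - D / cstar) / lam))) = 0 := by
    intro t
    by_cases h : ((1/(2*c)) * ((1/Real.sqrt lam) * w1 ((t - D / c) / lam))) = 0
    · rw [h, zero_mul]
    · have : t ∈ Function.support (fun t : ℝ =>
        (1/(2*c)) * ((1/Real.sqrt lam) * w1 ((t - D / c) / lam))) := h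
      have h2 := Set.disjoint_left.mp hsupp this
      have : ((1/(2*cstar)) * ((1/Real.sqrt lam) * w1 ((t - D / cstar) / lam))) = 0 := by
        by_contra hne
        exact h2 hne
      rw [this, mul_zero]
  simp only [hzero]
  simp
end

section
/- For each c > 0, the formula (S[c]f)(t) = (1/(2c))·∫_{z_min}^{z_max} f(z, t − |z_r − z|/c) dz defines a bounded linear operator S[c] : L²([z_min,z_max]×ℝ) → L²([0,T]), with operator norm at most √(z_max − z_min)/(2c): for every f ∈ L²([z_min,z_max]×ℝ), ‖S[c]f‖_{L²([0,T])} ≤ (√(z_max − z_min)/(2c))·‖f‖_{L²([z_min,z_max]×ℝ)}. -/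
open MeasureTheory Set

lemma cs_sq_integral {α : Type*} [MeasurableSpace α] {μ : Measure α} [IsFiniteMeasure μ]
    {f : α → ℝ} (hf : MemLp f 2 μ) :
    (∫ x, f x ∂μ) ^ 2 ≤ (μ univ).toReal * ∫ x, f x ^ 2 ∂μ := by
  have h2 : (2:ℝ).HolderConjugate 2 := Real.HolderConjugate.two_two
  have hof : ENNReal.ofReal (2:ℝ) = 2 := by norm_num
  have hone : MemLp (fun _ : α => (1:ℝ)) (ENNReal.ofReal 2) μ := by
    rw [hof]; exact memLp_const 1
  have hf' : MemLp f (ENNReal.ofReal 2) μ := by rw [hof]; exact hf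
  have key := integral_mul_norm_le_Lp_mul_Lq h2 hf' hone
  have hA : ∫ a, ‖f a‖ ^ (2:ℝ) ∂μ = ∫ a, f a ^ 2 ∂μ := by
    refine integral_congr_ae (Filter.Eventually.of_forall fun a => ?_)
    show ‖f a‖ ^ (2:ℝ) = f a ^ 2
    rw [show (2:ℝ) = ((2:ℕ):ℝ) by norm_num, Real.rpow_natCast, Real.norm_eq_abs, sq_abs]
  have hB : ∫ _a : α, ‖(1:ℝ)‖ ^ (2:ℝ) ∂μ = (μ univ).toReal := by
    simp [Real.one_rpow, Measure.real]
  rw [hA, hB] at key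
  have habs : |∫ x, f x ∂μ| ≤ ∫ a, ‖f a‖ * ‖(1:ℝ)‖ ∂μ := by
    simpa using norm_integral_le_integral_norm (f := f) (μ := μ)
  have hInonneg : 0 ≤ ∫ a, f a ^ 2 ∂μ := integral_nonneg fun a => sq_nonneg _
  have hμnonneg : 0 ≤ (μ univ).toReal := ENNReal.toReal_nonneg
  have h3 : |∫ x, f x ∂μ| ≤ (∫ a, f a ^ 2 ∂μ) ^ (1/(2:ℝ)) * (μ univ).toReal ^ (1/(2:ℝ)) :=
    habs.trans key
  have h4 := pow_le_pow_left₀ (abs_nonneg _) h3 2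
  rw [sq_abs] at h4
  calc (∫ x, f x ∂μ) ^ 2 ≤ ((∫ a, f a ^ 2 ∂μ) ^ (1/(2:ℝ)) * (μ univ).toReal ^ (1/(2:ℝ))) ^ 2 := h4
    _ = (μ univ).toReal * ∫ x, f x ^ 2 ∂μ := by
        rw [mul_pow, ← Real.rpow_natCast (_ ^ (1/(2:ℝ))) 2, ← Real.rpow_natCast ((μ univ).toReal ^ (1/(2:ℝ))) 2,
          ← Real.rpow_mul hInonneg, ← Real.rpow_mul hμnonneg]
        norm_num
        ring

/-- The extended modeling operator `S[c]` is bounded from `L²([zmin,zmax]×ℝ)` to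
`L²([0,T])`, with operator norm at most `√(zmax - zmin)/(2c)`. -/
theorem extended_modeling_operator_bounded
    (zmin zmax zr T c : ℝ) (hz : zmin < zmax) (hT : 0 < T) (hc : 0 < c)
    (f : ℝ → ℝ → ℝ)
    (hf : MemLp (fun p : ℝ × ℝ => f p.1 p.2) 2
      ((volume.restrict (Icc zmin zmax)).prod volume)) :
    Real.sqrt (∫ t in (0:ℝ)..T,
        ((1/(2*c)) * ∫ z in zmin..zmax, f z (t - |zr - z| / c)) ^ 2)
      ≤ (Real.sqrt (zmax - zmin) / (2*c)) *
        Real.sqrt (∫ z in zmin..zmax, ∫ t : ℝ, (f z t) ^ 2) := by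
  set μ : Measure ℝ := volume.restrict (Icc zmin zmax) with hμdef
  haveI : IsFiniteMeasure μ := ⟨by
    rw [hμdef, Measure.restrict_apply_univ, Real.volume_Icc]; exact ENNReal.ofReal_lt_top⟩
  have hμuniv : (μ univ).toReal = zmax - zmin := by
    rw [hμdef, Measure.restrict_apply_univ, Real.volume_Icc,
      ENNReal.toReal_ofReal (by linarith)]
  set h : ℝ → ℝ := fun z => |zr - z| / c with hhdef
  have hmeas_h : Measurable h := (measurable_const.sub measurable_id).abs.div_const c
  set g : ℝ × ℝ → ℝ := fun p => f p.1 (p.2 - h p.1) with hgdef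
  -- the skew translation is measure preserving
  have mp : MeasurePreserving (fun p : ℝ × ℝ => (p.1, p.2 - h p.1))
      (μ.prod volume) (μ.prod volume) :=
    (MeasurePreserving.id μ).skew_product (g := fun a t => t - h a)
      (measurable_snd.sub (hmeas_h.comp measurable_fst))
      (Filter.Eventually.of_forall fun a =>
        (measurePreserving_sub_right volume (h a)).map_eq)
  have hg : MemLp g 2 (μ.prod volume) := hf.comp_measurePreserving mp
  have hgsq : Integrable (fun p => g p ^ 2) (μ.prod volume) := hg.integrable_sq
  -- sections
  have hsect_int : ∀ᵐ t : ℝ, Integrable (fun z => g (z, t) ^ 2) μ :=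
    hgsq.prod_left_ae
  have hsect_meas : ∀ᵐ t : ℝ, AEStronglyMeasurable (fun z => g (z, t)) μ := by
    have heq : g =ᵐ[μ.prod volume] hg.1.mk g := hg.1.ae_eq_mk
    have hswap : (g ∘ Prod.swap) =ᵐ[volume.prod μ] (hg.1.mk g ∘ Prod.swap) :=
      Measure.measurePreserving_swap.quasiMeasurePreserving.ae_eq_comp heq
    have h2 : ∀ᵐ t : ℝ, ∀ᵐ z ∂μ, g (z, t) = hg.1.mk g (z, t) :=
      Measure.ae_ae_of_ae_prod hswap
    filter_upwards [h2] with t ht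
    exact (hg.1.stronglyMeasurable_mk.comp_measurable
      (measurable_id.prodMk measurable_const)).aestronglyMeasurable.congr
      (ht.mono fun z hz => hz.symm)
  set G : ℝ → ℝ := fun t => ∫ z, g (z, t) ^ 2 ∂μ with hGdef
  have hGint : Integrable G volume := hgsq.integral_prod_right
  have hGnonneg : ∀ t, 0 ≤ G t := fun t => integral_nonneg fun z => sq_nonneg _
  have hkey : ∀ᵐ t : ℝ, (∫ z, g (z, t) ∂μ) ^ 2 ≤ (zmax - zmin) * G t := by
    filter_upwards [hsect_int, hsect_meas] with t h1 h2
    have hm : MemLp (fun z => g (z, t)) 2 μ := (memLp_two_iff_integrable_sq h2).mpr h1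
    have := cs_sq_integral hm
    rwa [hμuniv] at this
  set I : ℝ := ∫ z, (∫ t : ℝ, f z t ^ 2) ∂μ with hIdef
  have hInonneg : 0 ≤ I := integral_nonneg fun z => integral_nonneg fun t => sq_nonneg _
  have htot : ∫ t : ℝ, G t = I := by
    have hswap := integral_integral_swap (f := fun z t => g (z, t) ^ 2) (μ := μ) (ν := volume) hgsq
    rw [hGdef, ← hswap, hIdef]
    refine integral_congr_ae (Filter.Eventually.of_forall fun z => ?_)
    simpa using integral_sub_right_eq_self (fun t => f z t ^ 2) (h z)
  have hJ : ∫ t in Ioc (0:ℝ) T, (∫ z, g (z, t) ∂μ) ^ 2 ≤ (zmax - zmin) * I := by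
    have step1 : ∫ t in Ioc (0:ℝ) T, (∫ z, g (z, t) ∂μ) ^ 2
        ≤ ∫ t in Ioc (0:ℝ) T, (zmax - zmin) * G t :=
      integral_mono_of_nonneg (Filter.Eventually.of_forall fun t => sq_nonneg _)
        ((hGint.const_mul _).restrict) (ae_restrict_of_ae hkey)
    have step3 : ∫ t in Ioc (0:ℝ) T, G t ≤ ∫ t : ℝ, G t :=
      setIntegral_le_integral hGint (Filter.Eventually.of_forall hGnonneg)
    calc ∫ t in Ioc (0:ℝ) T, (∫ z, g (z, t) ∂μ) ^ 2
        ≤ ∫ t in Ioc (0:ℝ) T, (zmax - zmin) * G t := step1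
      _ = (zmax - zmin) * ∫ t in Ioc (0:ℝ) T, G t := integral_const_mul _ _
      _ ≤ (zmax - zmin) * ∫ t : ℝ, G t := mul_le_mul_of_nonneg_left step3 (by linarith)
      _ = (zmax - zmin) * I := by rw [htot]
  have hF : ∀ t : ℝ, (∫ z in zmin..zmax, f z (t - |zr - z| / c)) = ∫ z, g (z, t) ∂μ := by
    intro t
    rw [intervalIntegral.integral_of_le hz.le, hμdef, ← integral_Icc_eq_integral_Ioc]
  have hRHS : (∫ z in zmin..zmax, ∫ t : ℝ, f z t ^ 2) = I := by
    rw [intervalIntegral.integral_of_le hz.le, hIdef, hμdef, ← integral_Icc_eq_integral_Ioc]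
  have hgoalL : (∫ t in (0:ℝ)..T,
        ((1/(2*c)) * ∫ z in zmin..zmax, f z (t - |zr - z| / c)) ^ 2)
      = (1/(2*c))^2 * ∫ t in Ioc (0:ℝ) T, (∫ z, g (z, t) ∂μ) ^ 2 := by
    rw [intervalIntegral.integral_of_le hT.le]
    calc (∫ t in Ioc (0:ℝ) T, ((1/(2*c)) * ∫ z in zmin..zmax, f z (t - |zr - z| / c)) ^ 2)
        = ∫ t in Ioc (0:ℝ) T, (1/(2*c))^2 * (∫ z, g (z, t) ∂μ) ^ 2 := by
          refine integral_congr_ae (Filter.Eventually.of_forall fun t => ?_)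
          show (1 / (2 * c) * ∫ z in zmin..zmax, f z (t - |zr - z| / c)) ^ 2
            = (1/(2*c))^2 * (∫ z, g (z, t) ∂μ) ^ 2
          rw [hF t, mul_pow]
      _ = (1/(2*c))^2 * ∫ t in Ioc (0:ℝ) T, (∫ z, g (z, t) ∂μ) ^ 2 := integral_const_mul _ _
  rw [hgoalL, hRHS]
  have h2c : (0:ℝ) < 2 * c := by linarith
  rw [Real.sqrt_mul (sq_nonneg _), Real.sqrt_sq (by positivity : (0:ℝ) ≤ 1/(2*c))]
  have hsq : Real.sqrt (∫ t in Ioc (0:ℝ) T, (∫ z, g (z, t) ∂μ) ^ 2)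
      ≤ Real.sqrt (zmax - zmin) * Real.sqrt I := by
    rw [← Real.sqrt_mul (by linarith : (0:ℝ) ≤ zmax - zmin)]
    exact Real.sqrt_le_sqrt hJ
  calc (1/(2*c)) * Real.sqrt (∫ t in Ioc (0:ℝ) T, (∫ z, g (z, t) ∂μ) ^ 2)
      ≤ (1/(2*c)) * (Real.sqrt (zmax - zmin) * Real.sqrt I) :=
        mul_le_mul_of_nonneg_left hsq (by positivity)
    _ = (Real.sqrt (zmax - zmin) / (2*c)) * Real.sqrt I := by ring
end

section
/- For each c > 0, the bounded linear operator S[c] : L²([z_min,z_max]×ℝ) → L²([0,T]) defined by (S[c]f)(t) = (1/(2c))·∫_{z_min}^{z_max} f(z, t − |z_r − z|/c) dz is surjective: for every d ∈ L²([0,T]) there exists f ∈ L²([z_min,z_max]×ℝ) with S[c]f = d. (An explicit preimage is f(z,t) = (2c/(z_max − z_min))·d̃(t + |z_r − z|/c), where d̃ is the extension of d by zero to ℝ.) -/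
open MeasureTheory Set

/-- The extended modeling operator `S[c]` is surjective onto `L²([0,T])`: every
`d ∈ L²([0,T])` has a square-integrable preimage on the strip `[zmin,zmax]×ℝ`. -/
theorem extended_modeling_operator_surjective
    (zmin zmax zr T c : ℝ) (hz : zmin < zmax) (hT : 0 < T) (hc : 0 < c)
    (d : ℝ → ℝ) (hd : MemLp d 2 (volume.restrict (Icc 0 T))) :
    ∃ f : ℝ → ℝ → ℝ,
      MemLp (fun p : ℝ × ℝ => f p.1 p.2) 2
        ((volume.restrict (Icc zmin zmax)).prod volume) ∧
      ∀ t ∈ Icc (0:ℝ) T,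
        (1/(2*c)) * ∫ z in zmin..zmax, f z (t - |zr - z| / c) = d t := by
  set D : ℝ → ℝ := (Icc (0:ℝ) T).indicator d with hD
  have hDmem : MemLp D 2 (volume : Measure ℝ) :=
    (memLp_indicator_iff_restrict measurableSet_Icc).2 hd
  set μ : Measure ℝ := volume.restrict (Icc zmin zmax) with hμ
  set k : ℝ := 2 * c / (zmax - zmin) with hk
  refine ⟨fun z t => k * D (t + |zr - z| / c), ?_, ?_⟩
  · -- measure preserving shear followed by snd
    have hg : Measurable (Function.uncurry fun z t : ℝ => t + |zr - z| / c) := by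
      apply Measurable.add measurable_snd
      exact ((measurable_const.sub measurable_fst).abs.div_const c)
    have hφ : MeasurePreserving (fun p : ℝ × ℝ => (p.1, p.2 + |zr - p.1| / c))
        (μ.prod volume) (μ.prod volume) := by
      refine (MeasurePreserving.id μ).skew_product hg (ae_of_all _ fun z => ?_)
      exact map_add_right_eq_self volume _
    have hsnd : MeasurePreserving (Prod.snd : ℝ × ℝ → ℝ) (μ.prod volume)
        ((μ univ) • volume) := ⟨measurable_snd, Measure.map_snd_prod⟩
    have hψ : MeasurePreserving (fun p : ℝ × ℝ => p.2 + |zr - p.1| / c)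
        (μ.prod volume) ((μ univ) • volume) := hsnd.comp hφ
    have hμuniv : μ univ ≠ ⊤ := by
      simp [hμ, Measure.restrict_apply_univ]
    have hmem : MemLp (D ∘ fun p : ℝ × ℝ => p.2 + |zr - p.1| / c) 2 (μ.prod volume) :=
      (hDmem.smul_measure hμuniv).comp_measurePreserving hψ
    exact hmem.const_mul k
  · intro t ht
    have hL : zmax - zmin ≠ 0 := sub_ne_zero.2 hz.ne'
    have hintegrand : ∀ z : ℝ, k * D (t - |zr - z| / c + |zr - z| / c) = k * d t := by
      intro z
      have : t - |zr - z| / c + |zr - z| / c = t := by ring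
      rw [this, hD, indicator_of_mem ht]
    rw [intervalIntegral.integral_congr (fun z _ => hintegrand z)]
    rw [intervalIntegral.integral_const]
    simp only [smul_eq_mul, hk]
    field_simp
end

section
/- For each c > 0, the adjoint of the bounded operator S[c] is given by the explicit formula (S[c]*e)(z,t) = (1/(2c))·ẽ(t + |z_r − z|/c) for (z,t) ∈ [z_min,z_max]×ℝ, where ẽ denotes the extension of e ∈ L²([0,T]) by zero to ℝ. Equivalently, for all f ∈ L²([z_min,z_max]×ℝ) and e ∈ L²([0,T]): ∫_0^T (S[c]f)(t)·e(t) dt = ∫_{z_min}^{z_max} ∫_ℝ f(z,t)·(1/(2c))·ẽ(t + |z_r − z|/c) dt dz. (Equation 25 of the paper.) -/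
open MeasureTheory Set

/-- Equation 25 of the paper: the adjoint of `S[c]` is
`(S[c]* e)(z,t) = (1/(2c))·ẽ(t + |zr - z|/c)` on the strip, where `ẽ` is the
extension of `e` by zero; equivalently the stated integral identity holds. -/
theorem extended_modeling_operator_adjoint
    (zmin zmax zr T c : ℝ) (hz : zmin < zmax) (hT : 0 < T) (hc : 0 < c)
    (f : ℝ → ℝ → ℝ) (e : ℝ → ℝ)
    (hf : MemLp (fun p : ℝ × ℝ => f p.1 p.2) 2
      ((volume.restrict (Icc zmin zmax)).prod volume))
    (he : MemLp e 2 (volume.restrict (Icc 0 T))) :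
    (∫ t in (0:ℝ)..T,
        ((1/(2*c)) * ∫ z in zmin..zmax, f z (t - |zr - z| / c)) * e t)
      = ∫ z in zmin..zmax, ∫ t : ℝ,
          f z t * ((1/(2*c)) * (Icc (0:ℝ) T).indicator e (t + |zr - z| / c)) := by
  set C : ℝ := 1/(2*c) with hC
  set s : ℝ → ℝ := fun z => |zr - z| / c with hs
  set μ : Measure ℝ := volume.restrict (Icc zmin zmax) with hμ
  set ν' : Measure ℝ := volume.restrict (Icc 0 T) with hν'
  have hsm : Measurable s := ((measurable_const.sub measurable_id).abs).div_const c
  -- measure preservation of φ (z,t) ↦ (z, t - s z)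
  have hφ : MeasurePreserving (fun p : ℝ × ℝ => (p.1, p.2 - s p.1))
      (μ.prod volume) (μ.prod volume) := by
    refine MeasurePreserving.skew_product (g := fun z t => t - s z) (MeasurePreserving.id μ)
      (measurable_snd.sub (hsm.comp measurable_fst)) (ae_of_all _ fun z => ?_)
    exact (measurePreserving_sub_right volume (s z)).map_eq
  -- g(z,t) = f z (t - s z) is Memℒp 2 on μ.prod volume
  have hg2 : MemLp (fun p : ℝ × ℝ => f p.1 (p.2 - s p.1)) 2 (μ.prod volume) :=
    hf.comp_measurePreserving hφ
  -- restrict to μ.prod ν'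
  have hprodeq : μ.prod ν' = (μ.prod volume).restrict (Set.univ ×ˢ Icc 0 T) := by
    rw [← Measure.prod_restrict, Measure.restrict_univ]
  have hg2' : MemLp (fun p : ℝ × ℝ => f p.1 (p.2 - s p.1)) 2 (μ.prod ν') := by
    rw [hprodeq]; exact hg2.restrict _
  -- e ∘ snd is Memℒp 2 on μ.prod ν'
  have hmap : Measure.map Prod.snd (μ.prod ν') = (μ Set.univ) • ν' :=
    Measure.map_snd_prod
  have hμfin : μ Set.univ ≠ ⊤ := by
    rw [hμ, Measure.restrict_apply_univ]
    exact measure_Icc_lt_top.ne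
  have hE : MemLp (fun p : ℝ × ℝ => e p.2) 2 (μ.prod ν') := by
    have h1 : MemLp e 2 ((μ Set.univ) • ν') := he.smul_measure hμfin
    rw [← hmap] at h1
    exact (memLp_map_measure_iff
      (he.aestronglyMeasurable.mono_ac (by rw [hmap]; exact Measure.AbsolutelyContinuous.rfl.smul_left _))
      measurable_snd.aemeasurable).mp h1
  -- integrability of the product
  have hInt : Integrable (fun p : ℝ × ℝ => f p.1 (p.2 - s p.1) * e p.2) (μ.prod ν') := by
    rw [← memLp_one_iff_integrable]
    have := hE.smul (φ := fun p : ℝ × ℝ => f p.1 (p.2 - s p.1)) (p := 2) (q := 2) (r := 1)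
      hg2'
    · simpa [smul_eq_mul, mul_comm, Pi.mul_def] using this
  -- inner integral on the RHS: translate by s z
  have hRHSinner : ∀ z : ℝ,
      (∫ t : ℝ, f z t * (C * (Icc (0:ℝ) T).indicator e (t + s z)))
        = C * ∫ t, f z (t - s z) * e t ∂ν' := by
    intro z
    have h1 : (∫ t : ℝ, f z t * (C * (Icc (0:ℝ) T).indicator e (t + s z)))
        = ∫ t : ℝ, (fun u => f z (u - s z) * (C * (Icc (0:ℝ) T).indicator e u)) (t + s z) := by
      congr 1; funext t; simp
    rw [h1, MeasureTheory.integral_add_right_eq_self (μ := volume)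
      (fun u => f z (u - s z) * (C * (Icc (0:ℝ) T).indicator e u)) (s z)]
    have h2 : (fun u => f z (u - s z) * (C * (Icc (0:ℝ) T).indicator e u))
        = (Icc (0:ℝ) T).indicator (fun u => C * (f z (u - s z) * e u)) := by
      funext u
      by_cases hu : u ∈ Icc (0:ℝ) T
      · simp only [Set.indicator_of_mem hu]; ring
      · simp [Set.indicator_of_notMem hu]
    rw [h2, integral_indicator measurableSet_Icc, integral_const_mul]
  -- the key Fubini identity
  have key : (∫ t, (C * ∫ z, f z (t - s z) ∂μ) * e t ∂ν')
      = ∫ z, C * ∫ t, f z (t - s z) * e t ∂ν' ∂μ := by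
    have h1 : ∀ t, (C * ∫ z, f z (t - s z) ∂μ) * e t
        = C * ∫ z, f z (t - s z) * e t ∂μ := fun t => by
      rw [mul_assoc, ← integral_mul_const]
    simp only [h1]
    rw [integral_const_mul, integral_const_mul]
    congr 1
    exact (integral_integral_swap hInt).symm
  calc (∫ t in (0:ℝ)..T, (C * ∫ z in zmin..zmax, f z (t - s z)) * e t)
      = ∫ t, (C * ∫ z, f z (t - s z) ∂μ) * e t ∂ν' := by
        rw [intervalIntegral.integral_of_le hT.le,
          ← MeasureTheory.integral_Icc_eq_integral_Ioc]
        congr 1; funext t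
        rw [intervalIntegral.integral_of_le hz.le,
          ← MeasureTheory.integral_Icc_eq_integral_Ioc]
    _ = ∫ z, (∫ t : ℝ, f z t * (C * (Icc (0:ℝ) T).indicator e (t + s z))) ∂μ := by
        rw [key]; congr 1; funext z; exact (hRHSinner z).symm
    _ = ∫ z in zmin..zmax, ∫ t : ℝ,
          f z t * (C * (Icc (0:ℝ) T).indicator e (t + s z)) := by
        rw [intervalIntegral.integral_of_le hz.le,
          MeasureTheory.integral_Icc_eq_integral_Ioc]
end

section
/- Let H and K be real Hilbert spaces, S : H → K a bounded linear operator with adjoint S*, α > 0, and r ∈ K. Then S∘S* + α²·I is a boundedly invertible positive operator on K, and the infimum over g ∈ H of (1/2)·(‖r − S g‖²_K + α²·‖g‖²_H) equals (α²/2)·⟨(S∘S* + α²·I)⁻¹ r, r⟩_K. (Equation 22 of the paper: the reduced WRI objective is a weighted norm of the residual.) -/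
open ContinuousLinearMap

set_option maxHeartbeats 1000000 in
/-- Equation 22 of the paper: `S S* + α² I` is boundedly invertible and positive,
and the reduced WRI objective equals the weighted residual norm
`(α²/2)·⟨(S S* + α² I)⁻¹ r, r⟩`. -/
theorem wri_weighted_norm_identity
    {H K : Type*} [NormedAddCommGroup H] [InnerProductSpace ℝ H] [CompleteSpace H]
    [NormedAddCommGroup K] [InnerProductSpace ℝ K] [CompleteSpace K]
    (S : H →L[ℝ] K) (α : ℝ) (hα : 0 < α) (r : K) :
    ∃ B : K →L[ℝ] K,
      (S ∘L (ContinuousLinearMap.adjoint S) + α^2 • (1 : K →L[ℝ] K)) ∘L B = 1 ∧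
      B ∘L (S ∘L (ContinuousLinearMap.adjoint S) + α^2 • (1 : K →L[ℝ] K)) = 1 ∧
      (∀ e : K, e ≠ 0 →
        0 < (inner ℝ ((S ∘L (ContinuousLinearMap.adjoint S) + α^2 • (1 : K →L[ℝ] K)) e) e : ℝ)) ∧
      (⨅ g : H, (1/2) * (‖r - S g‖^2 + α^2 * ‖g‖^2))
        = (α^2/2) * (inner ℝ (B r) r : ℝ) := by
  set A : K →L[ℝ] K := S ∘L (ContinuousLinearMap.adjoint S) + α^2 • (1 : K →L[ℝ] K) with hA
  have hAapp : ∀ e : K, A e = S (ContinuousLinearMap.adjoint S e) + α^2 • e := by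
    intro e; simp [hA]
  have hinner : ∀ e : K, (inner ℝ (A e) e : ℝ) = ‖(ContinuousLinearMap.adjoint S) e‖^2 + α^2 * ‖e‖^2 := by
    intro e
    rw [hAapp, inner_add_left, real_inner_smul_left,
      ← ContinuousLinearMap.adjoint_inner_right (𝕜 := ℝ),
      real_inner_self_eq_norm_sq, real_inner_self_eq_norm_sq]
  -- bilinear form and coercivity
  set Bf : K →L[ℝ] K →L[ℝ] ℝ := (innerSL ℝ).comp A with hBf
  have hBfapp : ∀ x y : K, Bf x y = inner ℝ (A x) y := fun x y => rfl
  have hcoer : IsCoercive Bf := by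
    refine ⟨α^2, by positivity, fun u => ?_⟩
    rw [hBfapp, real_inner_comm, real_inner_comm (A u) u, hinner]
    nlinarith [sq_nonneg ‖(ContinuousLinearMap.adjoint S) u‖, sq_nonneg ‖u‖]
  set E := hcoer.continuousLinearEquivOfBilin with hE
  have hEA : ∀ v : K, E v = A v := by
    intro v
    have := hcoer.unique_continuousLinearEquivOfBilin (v := v) (f := A v)
      (fun w => by rw [hBfapp])
    exact this.symm
  refine ⟨(E.symm : K →L[ℝ] K), ?_, ?_, ?_, ?_⟩
  · ext e; simpa [hEA (E.symm e)] using E.apply_symm_apply e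
  · ext e; rw [ContinuousLinearMap.comp_apply, ← hEA e]; simpa using E.symm_apply_apply e
  · intro e he
    rw [hinner]
    have : 0 < ‖e‖ := norm_pos_iff.mpr he
    nlinarith [sq_nonneg ‖(ContinuousLinearMap.adjoint S) e‖, pow_pos this 2, pow_pos hα 2,
      mul_pos (pow_pos hα 2) (pow_pos this 2)]
  · -- infimum computation
    set w : K := E.symm r with hw
    have hAw : A w = r := by rw [← hEA]; exact E.apply_symm_apply r
    set g₀ : H := (ContinuousLinearMap.adjoint S) w with hg0
    have hres : r - S g₀ = α^2 • w := by
      have := hAapp w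
      rw [hAw] at this
      rw [this]; abel
    set f : H → ℝ := fun g => (1/2) * (‖r - S g‖^2 + α^2 * ‖g‖^2) with hf
    have key : ∀ g : H, f g = f g₀ + (1/2) * (‖S (g - g₀)‖^2 + α^2 * ‖g - g₀‖^2) := by
      intro g
      have h1 : r - S g = (r - S g₀) - S (g - g₀) := by
        rw [map_sub]; abel
      have h2 : ‖r - S g‖^2 = ‖r - S g₀‖^2 - 2 * inner ℝ (r - S g₀) (S (g - g₀)) + ‖S (g - g₀)‖^2 := by
        rw [h1, @norm_sub_sq_real]
      have h3 : ‖g‖^2 = ‖g₀‖^2 + 2 * inner ℝ g₀ (g - g₀) + ‖g - g₀‖^2 := by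
        have : g = g₀ + (g - g₀) := by abel
        nth_rewrite 1 [this]
        rw [@norm_add_sq_real]
      have hcross : (inner ℝ (r - S g₀) (S (g - g₀)) : ℝ) = α^2 * inner ℝ g₀ (g - g₀) := by
        rw [hres, real_inner_smul_left, ← ContinuousLinearMap.adjoint_inner_left (𝕜 := ℝ), ← hg0]
      simp only [hf]
      rw [h2, h3, hcross]; ring
    have hmin : ∀ g : H, f g₀ ≤ f g := by
      intro g
      rw [key g]
      nlinarith [sq_nonneg ‖S (g - g₀)‖, sq_nonneg ‖g - g₀‖]
    have hfval : f g₀ = (α^2/2) * (inner ℝ ((E.symm : K →L[ℝ] K) r) r : ℝ) := by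
      have h1 : (inner ℝ ((E.symm : K →L[ℝ] K) r) r : ℝ) = inner ℝ w r := rfl
      have h2 : (inner ℝ w r : ℝ) = inner ℝ (A w) w := by
        rw [hAw, real_inner_comm]
      rw [h1, h2, hinner]
      have h3 : ‖r - S g₀‖^2 = (α^2)^2 * ‖w‖^2 := by
        rw [hres, norm_smul]
        simp [abs_of_pos (pow_pos hα 2), mul_pow]
      simp only [hf]
      rw [h3, ← hg0]
      ring
    have : (⨅ g : H, f g) = f g₀ := by
      apply le_antisymm
      · exact ciInf_le ⟨f g₀, fun x ⟨g, hg⟩ => hg ▸ hmin g⟩ g₀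
      · exact le_ciInf hmin
    rw [← hfval]
    exact this
end

section
/- Let H and K be real Hilbert spaces, S : H → K a surjective bounded linear operator with adjoint S*, α > 0, and r ∈ K. Then the infimum over g ∈ H of (1/2)·(‖r − S g‖²_K + α²·‖g‖²_H) equals the infimum over e ∈ K of (1/2)·(‖r − S S* e‖²_K + α²·‖S* e‖²_H). (Equation 20 of the paper, via the orthogonal decomposition of H into the range of S* and the kernel of S.) -/
open ContinuousLinearMap

/-- Equation 20 of the paper: for surjective `S`, the infimum over all sources `g`
equals the infimum over sources of the form `S* e`. -/
theorem wri_reduction_to_adjoint_range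
    {H K : Type*} [NormedAddCommGroup H] [InnerProductSpace ℝ H] [CompleteSpace H]
    [NormedAddCommGroup K] [InnerProductSpace ℝ K] [CompleteSpace K]
    (S : H →L[ℝ] K) (hS : Function.Surjective S) (α : ℝ) (hα : 0 < α) (r : K) :
    (⨅ g : H, (1/2) * (‖r - S g‖^2 + α^2 * ‖g‖^2))
      = ⨅ e : K, (1/2) * (‖r - S ((ContinuousLinearMap.adjoint S) e)‖^2
          + α^2 * ‖(ContinuousLinearMap.adjoint S) e‖^2) := by
  set A := ContinuousLinearMap.adjoint S with hA
  set φ : H → ℝ := fun g => (1/2) * (‖r - S g‖^2 + α^2 * ‖g‖^2) with hφ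
  have hφ_cont : Continuous φ := by
    apply Continuous.mul continuous_const
    exact ((continuous_const.sub S.continuous).norm.pow 2).add
      (continuous_const.mul ((continuous_norm.pow 2)))
  have hφ_nonneg : ∀ g, 0 ≤ φ g := fun g => by
    have : (0:ℝ) ≤ ‖r - S g‖^2 + α^2 * ‖g‖^2 := by positivity
    simpa [hφ] using by positivity
  have hbdd1 : BddBelow (Set.range φ) :=
    ⟨0, by rintro _ ⟨g, rfl⟩; exact hφ_nonneg g⟩
  have hbdd2 : BddBelow (Set.range fun e : K => φ (A e)) :=
    ⟨0, by rintro _ ⟨e, rfl⟩; exact hφ_nonneg _⟩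
  -- (range A)ᗮ = ker S
  have hker : (LinearMap.range (A : K →ₗ[ℝ] H))ᗮ = LinearMap.ker (S : H →ₗ[ℝ] K) := by
    ext x
    simp only [Submodule.mem_orthogonal, LinearMap.mem_range, LinearMap.mem_ker]
    constructor
    · intro h
      have := h (A (S x)) ⟨S x, rfl⟩
      rw [ContinuousLinearMap.adjoint_inner_left] at this
      exact inner_self_eq_zero.mp this
    · rintro hx _ ⟨e, rfl⟩
      rw [ContinuousLinearMap.coe_coe] at hx ⊢
      rw [ContinuousLinearMap.adjoint_inner_left, hx, inner_zero_right]
  have hclos : (LinearMap.ker (S : H →ₗ[ℝ] K))ᗮ = (LinearMap.range (A : K →ₗ[ℝ] H)).topologicalClosure := by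
    rw [← hker, Submodule.orthogonal_orthogonal_eq_closure]
  apply le_antisymm
  · exact le_ciInf fun e => ciInf_le hbdd1 (A e)
  · apply le_ciInf
    intro g
    set x : H := (Submodule.orthogonalProjection (LinearMap.ker (S : H →ₗ[ℝ] K))ᗮ g : H) with hx
    have hmem : x ∈ (LinearMap.range (A : K →ₗ[ℝ] H)).topologicalClosure := by
      rw [← hclos]; exact (Submodule.orthogonalProjection (LinearMap.ker (S : H →ₗ[ℝ] K))ᗮ g).2
    -- x is in the closure of the set range of A
    have hmem' : x ∈ closure (Set.range (A : K → H)) := by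
      have : (Set.range (A : K → H)) = (LinearMap.range (A : K →ₗ[ℝ] H) : Set H) := by
        ext y; simp
      rw [this]
      exact hmem
    -- ⨅ e, φ (A e) ≤ φ x
    have h1 : (⨅ e : K, φ (A e)) ≤ φ x := by
      obtain ⟨u, hu_mem, hu_lim⟩ := mem_closure_iff_seq_limit.mp hmem'
      have htend : Filter.Tendsto (fun n => φ (u n)) Filter.atTop (nhds (φ x)) :=
        (hφ_cont.continuousAt).tendsto.comp hu_lim
      refine ge_of_tendsto htend ?_
      filter_upwards with n
      obtain ⟨e, he⟩ := hu_mem n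
      calc (⨅ e : K, φ (A e)) ≤ φ (A e) := ciInf_le hbdd2 e
        _ = φ (u n) := by rw [he]
    -- φ x ≤ φ g
    have hSx : S x = S g := by
      have hgx : g - x ∈ LinearMap.ker (S : H →ₗ[ℝ] K) := by
        have h2 : g - x ∈ ((LinearMap.ker (S : H →ₗ[ℝ] K))ᗮ)ᗮ := by
          have := Submodule.sub_starProjection_mem_orthogonal (K := (LinearMap.ker (S : H →ₗ[ℝ] K))ᗮ) g
          exact this
        rwa [Submodule.orthogonal_orthogonal] at h2
      have : S (g - x) = 0 := hgx
      rw [map_sub, sub_eq_zero] at this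
      exact this.symm
    have hnx : ‖x‖ ≤ ‖g‖ := by
      calc ‖x‖ = ‖Submodule.orthogonalProjection (LinearMap.ker (S : H →ₗ[ℝ] K))ᗮ g‖ := by rw [hx]; rfl
        _ ≤ ‖(Submodule.orthogonalProjection (LinearMap.ker (S : H →ₗ[ℝ] K))ᗮ : H →L[ℝ] _)‖ * ‖g‖ :=
            (Submodule.orthogonalProjection (LinearMap.ker (S : H →ₗ[ℝ] K))ᗮ).le_opNorm g
        _ ≤ 1 * ‖g‖ := by
            gcongr
            exact Submodule.orthogonalProjectionOnto_norm_le _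
        _ = ‖g‖ := one_mul _
    have h2 : φ x ≤ φ g := by
      have : ‖x‖^2 ≤ ‖g‖^2 := by
        apply pow_le_pow_left₀ (norm_nonneg _) hnx
      simp only [hφ, hSx]
      nlinarith [sq_nonneg α]
    exact h1.trans h2
end

section
/- Assume c_* < c_max and that w₁ is not almost everywhere zero. Then the family of FWI objectives admits no uniform Lipschitz bound in c: for every K > 0 there exist λ ∈ (0, λ₀) and c ∈ (c_*, c_max] such that J_FWI^λ(c) − J_FWI^λ(c_*) > K·(c − c_*), where J_FWI^λ(c) = (1/2)·‖d_λ − S_p[c]w_λ‖²_{L²([0,T])}. In particular the derivatives with respect to c of the objectives J_FWI^λ are not bounded uniformly over λ ∈ (0, λ₀) and c ∈ [c_min, c_max]. (Non-smoothness consequence stated in the Discussion section.) -/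
open MeasureTheory Set

/-- The integral of `w1 ^ 2` over `[0,1]` is positive when `w1` is continuous,
not a.e. zero, and supported in `Ioo 0 1`. -/
lemma sq_integral_pos_of_ne_ae_zero (w1 : ℝ → ℝ) (hw1c : Continuous w1)
    (hw1s : Function.support w1 ⊆ Ioo 0 1) (hw1ne : ¬ (w1 =ᵐ[volume] 0)) :
    0 < ∫ s in (0:ℝ)..1, (w1 s) ^ 2 := by
  have hInt : IntervalIntegrable (fun s => (w1 s) ^ 2) volume 0 1 :=
    ((hw1c.pow 2).intervalIntegrable _ _)
  rw [intervalIntegral.integral_pos_iff_support_of_nonneg_ae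
      (Filter.Eventually.of_forall fun x => sq_nonneg _) hInt]
  refine ⟨one_pos, ?_⟩
  have hsupp : Function.support (fun s => (w1 s) ^ 2) = Function.support w1 := by
    ext x; simp [Function.mem_support, pow_eq_zero_iff]
  rw [hsupp]
  have h1 : Function.support w1 ∩ Ioc 0 1 = Function.support w1 :=
    inter_eq_left.mpr (fun x hx => Ioo_subset_Ioc_self (hw1s hx))
  rw [h1]
  by_contra h
  push_neg at h
  apply hw1ne
  have h0 : volume (Function.support w1) = 0 := le_antisymm (by simpa using h) zero_le
  rw [Filter.EventuallyEq, ae_iff]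
  simpa [Function.support] using h0

/-- Non-smoothness consequence from the Discussion section: the FWI objectives
`J_FWI^lam` admit no uniform Lipschitz bound in `c` over `lam ∈ (0, lam₀)`,
hence their `c`-derivatives are not uniformly bounded. -/
theorem fwi_no_uniform_lipschitz_bound
    (zs zr T cmin cmax cstar : ℝ) (w1 : ℝ → ℝ)
    (hzr : zs ≠ zr) (hT : 0 < T)
    (hcmin : 0 < cmin) (hcc : cmin ≤ cmax)
    (htransit : |zs - zr| / cmin < T)
    (hw1c : Continuous w1) (hw1s : Function.support w1 ⊆ Ioo 0 1)
    (hw1ne : ¬ (w1 =ᵐ[volume] 0))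
    (hcstar : cstar ∈ Icc cmin cmax) (hlt : cstar < cmax)
    (J : ℝ → ℝ → ℝ)
    (hJ : ∀ lam c, J lam c = (1/2) * ∫ t in (0:ℝ)..T,
        ((1/(2*cstar)) * ((1/Real.sqrt lam) * w1 ((t - |zs - zr| / cstar) / lam))
          - (1/(2*c)) * ((1/Real.sqrt lam) * w1 ((t - |zs - zr| / c) / lam))) ^ 2) :
    ∀ K > 0, ∃ lam ∈ Ioo 0 (T - |zs - zr| / cmin), ∃ c ∈ Ioc cstar cmax,
      J lam c - J lam cstar > K * (c - cstar) := by
  intro K hK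
  set D := |zs - zr| with hD
  have hD0 : 0 < D := abs_pos.mpr (sub_ne_zero.mpr hzr)
  have hcstar0 : 0 < cstar := lt_of_lt_of_le hcmin hcstar.1
  set E := ∫ s in (0:ℝ)..1, (w1 s) ^ 2 with hE
  have hE0 : 0 < E := sq_integral_pos_of_ne_ae_zero w1 hw1c hw1s hw1ne
  set M := E / (8 * cstar ^ 2) with hM
  have hM0 : 0 < M := by positivity
  set c := min cmax (cstar + M / (2 * K)) with hc
  have hcc1 : cstar < c := by
    apply lt_min hlt
    have : 0 < M / (2 * K) := by positivity
    linarith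
  have hc0 : 0 < c := lt_trans hcstar0 hcc1
  have hcIoc : c ∈ Ioc cstar cmax := ⟨hcc1, min_le_left _ _⟩
  set τs := D / cstar with hτs
  set τc := D / c with hτc
  have hττ : τc < τs := div_lt_div_of_pos_left hD0 hcstar0 hcc1
  set δ := τs - τc with hδ
  have hδ0 : 0 < δ := sub_pos.mpr hττ
  set lm0 := T - D / cmin with hlm0
  have hlm00 : 0 < lm0 := sub_pos.mpr htransit
  set lam := min lm0 δ / 2 with hlam
  have hlam0 : 0 < lam := by positivity
  have hmin0 : 0 < min lm0 δ := lt_min hlm00 hδ0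
  have hlammin : lam < min lm0 δ := by
    rw [hlam]; exact half_lt_self hmin0
  have hlamlm0 : lam < lm0 := lt_of_lt_of_le hlammin (min_le_left _ _)
  have hlamδ : lam < δ := lt_of_lt_of_le hlammin (min_le_right _ _)
  have hτs0 : 0 < τs := div_pos hD0 hcstar0
  have hτsle : τs ≤ D / cmin := by
    rw [hτs]; gcongr; exact hcstar.1
  have hTτs : lam ≤ T - τs := by rw [hτs]; rw [hlm0] at hlamlm0; linarith
  refine ⟨lam, ⟨hlam0, hlamlm0⟩, c, hcIoc, ?_⟩
  have hJ0 : J lam cstar = 0 := by rw [hJ]; simp [hτs]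
  set s : ℝ := 1 / Real.sqrt lam with hs
  have hs2 : s ^ 2 = 1 / lam := by
    rw [hs, div_pow, one_pow, Real.sq_sqrt hlam0.le]
  set A : ℝ → ℝ := fun t => (1/(2*cstar)) * (s * w1 ((t - τs) / lam)) with hA
  set B : ℝ → ℝ := fun t => (1/(2*c)) * (s * w1 ((t - τc) / lam)) with hB
  have hJc : J lam c = (1/2) * ∫ t in (0:ℝ)..T, (A t - B t) ^ 2 := by
    rw [hJ]
  have hABzero : ∀ t, A t * B t = 0 := by
    intro t
    rcases eq_or_ne (w1 ((t - τs) / lam)) 0 with h | h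
    · simp [hA, h]
    rcases eq_or_ne (w1 ((t - τc) / lam)) 0 with h' | h'
    · simp [hB, h']
    exfalso
    have h1 := hw1s (Function.mem_support.mpr h)
    have h2 := hw1s (Function.mem_support.mpr h')
    have e1 : τs < t := by
      have hp := h1.1
      rw [div_pos_iff] at hp
      rcases hp with ⟨hp, _⟩ | ⟨_, hp⟩
      · linarith
      · linarith
    have e2 : t < τc + lam := by
      have := (div_lt_one hlam0).mp h2.2
      linarith
    linarith
  have hcontA : Continuous A :=
    continuous_const.mul (continuous_const.mul
      (hw1c.comp ((continuous_id.sub continuous_const).div_const _)))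
  have hcontB : Continuous B :=
    continuous_const.mul (continuous_const.mul
      (hw1c.comp ((continuous_id.sub continuous_const).div_const _)))
  have hptwise : ∀ t ∈ Icc (0:ℝ) T, (A t) ^ 2 ≤ (A t - B t) ^ 2 := by
    intro t _
    nlinarith [hABzero t, sq_nonneg (B t)]
  have hIntA : IntervalIntegrable (fun t => (A t) ^ 2) volume 0 T :=
    ((hcontA.pow 2).intervalIntegrable _ _)
  have hIntAB : IntervalIntegrable (fun t => (A t - B t) ^ 2) volume 0 T :=
    (((hcontA.sub hcontB).pow 2).intervalIntegrable _ _)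
  have hmono : ∫ t in (0:ℝ)..T, (A t) ^ 2 ≤ ∫ t in (0:ℝ)..T, (A t - B t) ^ 2 :=
    intervalIntegral.integral_mono_on hT.le hIntA hIntAB hptwise
  have hAcomp : ∫ t in (0:ℝ)..T, (A t) ^ 2
      = (1/(2*cstar))^2 * s^2 * ∫ t in (0:ℝ)..T, (w1 ((t - τs)/lam))^2 := by
    rw [← intervalIntegral.integral_const_mul]
    apply intervalIntegral.integral_congr
    intro t _
    simp only [hA]; ring
  have hscale : ∫ t in (0:ℝ)..T, (w1 ((t - τs)/lam))^2
      = lam * ∫ x in ((0:ℝ)/lam - τs/lam)..(T/lam - τs/lam), (w1 x)^2 := by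
    have key := intervalIntegral.integral_comp_div_sub (f := fun x => (w1 x)^2)
      (a := (0:ℝ)) (b := T) (c := lam) (ne_of_gt hlam0) (τs/lam)
    rw [smul_eq_mul] at key
    rw [← key]
    apply intervalIntegral.integral_congr
    intro t _
    simp only [sub_div]
  have hzero_out : ∀ x : ℝ, x ∉ Ioo (0:ℝ) 1 → (w1 x)^2 = 0 := by
    intro x hx
    have : w1 x = 0 := by
      by_contra hne
      exact hx (hw1s (Function.mem_support.mpr hne))
    simp [this]
  set u := (0:ℝ)/lam - τs/lam with hu'
  set v := T/lam - τs/lam with hv'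
  have hu : u ≤ 0 := by
    have : 0 ≤ τs / lam := div_nonneg hτs0.le hlam0.le
    rw [hu']; simp; linarith
  have hv : 1 ≤ v := by
    rw [hv', div_sub_div_same, le_div_iff₀ hlam0]
    linarith
  have hIw : ∀ a b : ℝ, IntervalIntegrable (fun x => (w1 x)^2) volume a b :=
    fun a b => ((hw1c.pow 2).intervalIntegrable _ _)
  have hextL : ∫ x in u..(0:ℝ), (w1 x)^2 = 0 := by
    rw [intervalIntegral.integral_congr (g := fun _ => (0:ℝ)) ?_]
    · simp
    · intro x hx
      rw [uIcc_of_le hu] at hx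
      exact hzero_out x (fun hmem => absurd hmem.1 (not_lt.mpr hx.2))
  have hextR : ∫ x in (1:ℝ)..v, (w1 x)^2 = 0 := by
    rw [intervalIntegral.integral_congr (g := fun _ => (0:ℝ)) ?_]
    · simp
    · intro x hx
      rw [uIcc_of_le hv] at hx
      exact hzero_out x (fun hmem => absurd hmem.2 (not_lt.mpr hx.1))
  have hsplit1 := intervalIntegral.integral_add_adjacent_intervals
    (a := u) (b := (0:ℝ)) (c := 1) (hIw u 0) (hIw 0 1)
  have hsplit2 := intervalIntegral.integral_add_adjacent_intervals
    (a := u) (b := (1:ℝ)) (c := v) (hIw u 1) (hIw 1 v)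
  have hext : ∫ x in u..v, (w1 x)^2 = E := by
    rw [← hsplit2, ← hsplit1, hextL, hextR, hE]
    ring
  have hAval : ∫ t in (0:ℝ)..T, (A t) ^ 2 = E / (4 * cstar ^ 2) := by
    rw [hAcomp, hscale, hext, hs2]
    field_simp
    ring
  have hMJ : M ≤ J lam c - J lam cstar := by
    rw [hJ0, sub_zero, hJc]
    have : (1/2) * ∫ t in (0:ℝ)..T, (A t) ^ 2 ≤ (1/2) * ∫ t in (0:ℝ)..T, (A t - B t) ^ 2 := by
      linarith
    rw [hAval] at this
    rw [hM]
    have heq : E / (8 * cstar ^ 2) = 1/2 * (E / (4 * cstar ^ 2)) := by ring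
    linarith
  have hcd : c - cstar ≤ M / (2 * K) := by
    have := min_le_right cmax (cstar + M / (2 * K))
    rw [hc]; linarith
  have hKle : K * (c - cstar) ≤ M / 2 := by
    have h1 : K * (c - cstar) ≤ K * (M / (2 * K)) :=
      mul_le_mul_of_nonneg_left hcd hK.le
    have h2 : K * (M / (2 * K)) = M / 2 := by field_simp
    linarith
  linarith
end
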